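/- arXiv:1611.01931 — 5 statements merged into one kernel-verified Lean document; each statement's English description precedes it below -/
import Mathlib

section
/- Let Q be a commutative ring, f ∈ Q, and let (F₀, F₁, s₀ : F₀ → F₁, s₁ : F₁ → F₀) and (F₀', F₁', s₀' : F₀' → F₁', s₁' : F₁' → F₀') be matrix factorizations of f and f' respectively (i.e. s₀s₁ = f·id, s₁s₀ = f·id, and similarly for the primed maps with f'). Define maps t₁ : (F₀⊗F₁') ⊕ (F₁⊗F₀') → (F₀⊗F₀') ⊕ (F₁⊗F₁') and t₀ in the opposite direction by the block matrices t₀ = [[id⊗s₀', s₁⊗id],[−s₀⊗id, id⊗s₁']] and t₁ = [[id⊗s₁', −s₁⊗id],[s₀⊗id, id⊗s₀']]. Then t₀t₁ = (f+f')·id and t₁t₀ = (f+f')·id, so the tensor product is a matrix factorization of f + f'. -/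
open TensorProduct

set_option maxHeartbeats 1000000

/-- the tensor product of a matrix factorization of `f` and a matrix
factorization of `f'` is a matrix factorization of `f + f'`. -/
theorem tensor_product_matrix_factorization
    (Q : Type) [CommRing Q] (f f' : Q)
    (F₀ F₁ F₀' F₁' : Type)
    [AddCommGroup F₀] [AddCommGroup F₁] [AddCommGroup F₀'] [AddCommGroup F₁']
    [Module Q F₀] [Module Q F₁] [Module Q F₀'] [Module Q F₁']
    [Module.Free Q F₀] [Module.Free Q F₁] [Module.Free Q F₀'] [Module.Free Q F₁']
    [Module.Finite Q F₀] [Module.Finite Q F₁] [Module.Finite Q F₀'] [Module.Finite Q F₁']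
    (s₀ : F₀ →ₗ[Q] F₁) (s₁ : F₁ →ₗ[Q] F₀)
    (s₀' : F₀' →ₗ[Q] F₁') (s₁' : F₁' →ₗ[Q] F₀')
    (h₀ : s₀.comp s₁ = f • LinearMap.id) (h₁ : s₁.comp s₀ = f • LinearMap.id)
    (h₀' : s₀'.comp s₁' = f' • LinearMap.id) (h₁' : s₁'.comp s₀' = f' • LinearMap.id)
    -- the block matrix maps
    (t₀ : (F₀ ⊗[Q] F₀') × (F₁ ⊗[Q] F₁') →ₗ[Q] (F₀ ⊗[Q] F₁') × (F₁ ⊗[Q] F₀'))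
    (t₁ : (F₀ ⊗[Q] F₁') × (F₁ ⊗[Q] F₀') →ₗ[Q] (F₀ ⊗[Q] F₀') × (F₁ ⊗[Q] F₁'))
    (ht₀ : t₀ = LinearMap.prod
      ((TensorProduct.map (LinearMap.id : F₀ →ₗ[Q] F₀) s₀').comp (LinearMap.fst Q _ _)
        + (TensorProduct.map s₁ (LinearMap.id : F₁' →ₗ[Q] F₁')).comp (LinearMap.snd Q _ _))
      ((-(TensorProduct.map s₀ (LinearMap.id : F₀' →ₗ[Q] F₀'))).comp (LinearMap.fst Q _ _)
        + (TensorProduct.map (LinearMap.id : F₁ →ₗ[Q] F₁) s₁').comp (LinearMap.snd Q _ _)))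
    (ht₁ : t₁ = LinearMap.prod
      ((TensorProduct.map (LinearMap.id : F₀ →ₗ[Q] F₀) s₁').comp (LinearMap.fst Q _ _)
        + (-(TensorProduct.map s₁ (LinearMap.id : F₀' →ₗ[Q] F₀'))).comp (LinearMap.snd Q _ _))
      ((TensorProduct.map s₀ (LinearMap.id : F₁' →ₗ[Q] F₁')).comp (LinearMap.fst Q _ _)
        + (TensorProduct.map (LinearMap.id : F₁ →ₗ[Q] F₁) s₀').comp (LinearMap.snd Q _ _))) :
    t₀.comp t₁ = (f + f') • LinearMap.id ∧ t₁.comp t₀ = (f + f') • LinearMap.id := by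
  subst ht₀ ht₁
  constructor <;>
  · simp only [LinearMap.prod_comp, LinearMap.add_comp, LinearMap.neg_comp,
      LinearMap.comp_assoc, LinearMap.fst_prod, LinearMap.snd_prod, LinearMap.comp_add,
      LinearMap.comp_neg]
    simp only [← LinearMap.comp_assoc, ← TensorProduct.map_comp, h₀, h₁, h₀', h₁',
      TensorProduct.map_smul_left, TensorProduct.map_smul_right, TensorProduct.map_id,
      LinearMap.smul_comp, LinearMap.id_comp, LinearMap.comp_id]
    refine LinearMap.ext fun x => Prod.ext ?_ ?_ <;>
      simp [add_smul] <;> abel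
end

section
/- Let k be a field, R = k[x₁,…,xₙ]/(f) with f a homogeneous non-zero-divisor of degree d in the weighted polynomial ring Q = k[x₁,…,xₙ], and let (F₀, F₁, s₀, s₁) be a graded matrix factorization of f (s₀ of degree d, s₁ of degree 0, s₀s₁ = f·id, s₁s₀ = f·id). Then coker(s₁) is an R-module (i.e. f annihilates coker(s₁)), and the induced 2-periodic sequence ⋯ → F₀(−d) ⊗_Q R → F₁ ⊗_Q R → F₀ ⊗_Q R → coker(s₁) → 0 is exact. -/
open MvPolynomial TensorProduct

set_option maxHeartbeats 1000000
set_option synthInstance.maxHeartbeats 400000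

section Aux

variable {R : Type} [CommRing R] {M N : Type} [AddCommGroup M] [AddCommGroup N]
  [Module R M] [Module R N]

/-- The map `m ↦ 1 ⊗ m` into the base change along `R ⧸ I` is surjective. -/
lemma aux_mk_one_surjective (I : Ideal R) :
    Function.Surjective (TensorProduct.mk R (R ⧸ I) M 1) := by
  intro y
  obtain ⟨z, hz⟩ := (TensorProduct.quotTensorEquivQuotSMul M I).symm.surjective y
  obtain ⟨m, rfl⟩ := Submodule.mkQ_surjective _ z
  exact ⟨m, by simpa using hz⟩

lemma aux_mk_one_eq_zero_iff {f : R} (m : M) :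
    TensorProduct.mk R (R ⧸ Ideal.span {f}) M 1 m = 0 ↔ ∃ m' : M, m = f • m' := by
  rw [← (TensorProduct.quotTensorEquivQuotSMul M (Ideal.span {f})).map_eq_zero_iff]
  show TensorProduct.quotTensorEquivQuotSMul M (Ideal.span {f})
      ((Ideal.Quotient.mk _ 1) ⊗ₜ[R] m) = 0 ↔ _
  rw [TensorProduct.quotTensorEquivQuotSMul_mk_tmul, one_smul,
    Submodule.Quotient.mk_eq_zero, Submodule.ideal_span_singleton_smul]
  constructor
  · intro h
    rw [← SetLike.mem_coe, Submodule.coe_pointwise_smul] at h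
    obtain ⟨m', -, hm'⟩ := Set.mem_smul_set.mp h
    exact ⟨m', hm'.symm⟩
  · rintro ⟨m', rfl⟩
    exact Submodule.smul_mem_pointwise_smul m' f ⊤ trivial

/-- Main exactness lemma for matrix factorizations. -/
lemma aux_mf_exact {f : R}
    (hinj : ∀ x : N, f • x = 0 → x = 0)
    (a : M →ₗ[R] N) (b : N →ₗ[R] M)
    (hba : b.comp a = f • LinearMap.id) (hab : a.comp b = f • LinearMap.id) :
    Function.Exact (a.baseChange (R ⧸ Ideal.span {f})) (b.baseChange (R ⧸ Ideal.span {f})) := by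
  set A := R ⧸ Ideal.span {f} with hA
  intro y
  constructor
  · intro hy
    obtain ⟨nn, rfl⟩ := aux_mk_one_surjective (M := N) (Ideal.span {f}) y
    have h1 : b.baseChange A (TensorProduct.mk R A N 1 nn)
        = TensorProduct.mk R A M 1 (b nn) := by
      simp [TensorProduct.mk_apply]
    rw [h1] at hy
    obtain ⟨m, hm⟩ := (aux_mk_one_eq_zero_iff (b nn)).mp hy
    have hab' : a (b nn) = f • nn := congrFun (congrArg DFunLike.coe hab) nn
    have h2 : f • (nn - a m) = 0 := by
      have : a (f • m) = f • nn := by rw [← hm, hab']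
      rw [map_smul] at this
      rw [smul_sub, this, sub_self]
    have h3 : nn = a m := by
      have := hinj _ h2
      rwa [sub_eq_zero] at this
    refine ⟨TensorProduct.mk R A M 1 m, ?_⟩
    rw [h3]
    simp [TensorProduct.mk_apply]
  · rintro ⟨x, rfl⟩
    have halg : algebraMap R A f = 0 := by
      rw [Ideal.Quotient.algebraMap_eq, Ideal.Quotient.eq_zero_iff_mem]
      exact Ideal.subset_span rfl
    obtain ⟨m, rfl⟩ := aux_mk_one_surjective (M := M) (Ideal.span {f}) x
    have h1 : b.baseChange A (a.baseChange A (TensorProduct.mk R A M 1 m))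
        = TensorProduct.mk R A M 1 (b (a m)) := by
      simp [TensorProduct.mk_apply]
    rw [h1]
    have h2 : b (a m) = f • m := congrFun (congrArg DFunLike.coe hba) m
    rw [h2]
    show (1 : A) ⊗ₜ[R] (f • m) = 0
    rw [TensorProduct.tmul_smul, ← algebraMap_smul A f, halg, zero_smul]

end Aux

/-- for a graded matrix factorization `(F₀, F₁, s₀, s₁)` of a homogeneous
non-zero-divisor `f` of degree `d` in the weighted polynomial ring `Q = k[x₁,…,xₙ]`,
the cokernel of `s₁` is annihilated by `f` (hence is a module over `R = Q/(f)`), and the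
induced 2-periodic sequence `⋯ → F₀ ⊗ R → F₁ ⊗ R → F₀ ⊗ R → coker(s₁) → 0` is exact. -/
theorem matrix_factorization_two_periodic_resolution
    (kk : Type) [Field kk] (n : ℕ) (w : Fin n → ℕ) (hw : ∀ i, 0 < w i) (d : ℕ)
    (f : MvPolynomial (Fin n) kk)
    (hhom : IsWeightedHomogeneous w f d)
    (hnzd : f ∈ nonZeroDivisors (MvPolynomial (Fin n) kk))
    (F₀ F₁ : Type) [AddCommGroup F₀] [AddCommGroup F₁]
    [Module (MvPolynomial (Fin n) kk) F₀] [Module (MvPolynomial (Fin n) kk) F₁]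
    [Module.Free (MvPolynomial (Fin n) kk) F₀] [Module.Free (MvPolynomial (Fin n) kk) F₁]
    [Module.Finite (MvPolynomial (Fin n) kk) F₀] [Module.Finite (MvPolynomial (Fin n) kk) F₁]
    (s₀ : F₀ →ₗ[MvPolynomial (Fin n) kk] F₁) (s₁ : F₁ →ₗ[MvPolynomial (Fin n) kk] F₀)
    (h₀ : s₀.comp s₁ = f • LinearMap.id) (h₁ : s₁.comp s₀ = f • LinearMap.id) :
    -- `f` annihilates `coker(s₁)`
    (∀ x : F₀ ⧸ LinearMap.range s₁, f • x = 0) ∧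
    -- exactness of the 2-periodic complex over `R = Q/(f)`
    (Function.Exact
        (LinearMap.baseChange (MvPolynomial (Fin n) kk ⧸ Ideal.span {f}) s₀)
        (LinearMap.baseChange (MvPolynomial (Fin n) kk ⧸ Ideal.span {f}) s₁) ∧
      Function.Exact
        (LinearMap.baseChange (MvPolynomial (Fin n) kk ⧸ Ideal.span {f}) s₁)
        (LinearMap.baseChange (MvPolynomial (Fin n) kk ⧸ Ideal.span {f}) s₀) ∧
      Function.Exact
        (LinearMap.baseChange (MvPolynomial (Fin n) kk ⧸ Ideal.span {f}) s₁)
        (LinearMap.range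
          (LinearMap.baseChange (MvPolynomial (Fin n) kk ⧸ Ideal.span {f}) s₁)).mkQ ∧
      Function.Surjective
        (LinearMap.range
          (LinearMap.baseChange (MvPolynomial (Fin n) kk ⧸ Ideal.span {f}) s₁)).mkQ) := by
  have hf0 : f ≠ 0 := nonZeroDivisors.ne_zero hnzd
  have hinj0 : ∀ x : F₀, f • x = 0 → x = 0 := fun x hx => by
    rcases smul_eq_zero.mp hx with h | h
    exacts [absurd h hf0, h]
  have hinj1 : ∀ x : F₁, f • x = 0 → x = 0 := fun x hx => by
    rcases smul_eq_zero.mp hx with h | h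
    exacts [absurd h hf0, h]
  refine ⟨?_, aux_mf_exact hinj1 s₀ s₁ h₁ h₀, aux_mf_exact hinj0 s₁ s₀ h₀ h₁,
    LinearMap.exact_map_mkQ_range _, Submodule.mkQ_surjective _⟩
  intro x
  obtain ⟨y, rfl⟩ := Submodule.mkQ_surjective _ x
  have h3 : f • (Submodule.mkQ (LinearMap.range s₁) y) = Submodule.mkQ _ (f • y) := by
    simp
  rw [h3]
  have h2 : f • y = s₁ (s₀ y) := (congrFun (congrArg DFunLike.coe h₁) y).symm
  rw [h2, Submodule.mkQ_apply, Submodule.Quotient.mk_eq_zero]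
  exact ⟨s₀ y, rfl⟩
end

section
/- Let F = {(v,w) ∈ ℂ² : vw = 1} with the μ_d-action ζ·(v,w) = (ζᵃv, ζᵇw), a + b = d, ζ = exp(2πi/d). Then the unreduced suspension ΣF is μ_d-equivariantly homotopy equivalent to the one-point compactification S^V of the one-dimensional complex μ_d-representation V on which ζ acts as multiplication by ζᵃ. -/
open Complex OnePoint

/-- The Milnor fiber of `vw` on `ℂ²`. -/
abbrev MilnorFiberVW : Type := {p : ℂ × ℂ // p.1 * p.2 = 1}

/-- The relation on `X × ℝ` collapsing the two ends of the cylinder; the quotient is the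
unreduced suspension of `X`. -/
def suspRel (X : Type*) : X × ℝ → X × ℝ → Prop := fun p q =>
  (p.2 ≤ 0 ∧ q.2 ≤ 0) ∨ (1 ≤ p.2 ∧ 1 ≤ q.2)

/-- The unreduced suspension of a topological space, as a quotient of `X × ℝ`. -/
def Susp (X : Type*) [TopologicalSpace X] : Type _ := Quot (suspRel X)

instance (X : Type*) [TopologicalSpace X] : TopologicalSpace (Susp X) :=
  instTopologicalSpaceQuot

section S12aux
open Filter Topology Set
namespace S12
noncomputable section

lemma v_ne (x : MilnorFiberVW) : x.1.1 ≠ 0 := by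
  intro h; have := x.2; rw [h, zero_mul] at this; exact zero_ne_one this
lemma norm_v_pos (x : MilnorFiberVW) : 0 < ‖x.1.1‖ := norm_pos_iff.mpr (v_ne x)
def cl (s : ℝ) : ℝ := max 0 (min 1 s)
lemma cl_cont : Continuous cl := by unfold cl; fun_prop
@[simp] lemma cl_nonneg (s : ℝ) : 0 ≤ cl s := le_max_left _ _
@[simp] lemma cl_le_one (s : ℝ) : cl s ≤ 1 := max_le zero_le_one (min_le_left _ _)
lemma cl_lt_one {s : ℝ} (h : s < 1) : cl s < 1 := by
  unfold cl
  rcases le_or_gt s 0 with h0 | h0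
  · rw [min_eq_right (h0.trans zero_le_one), max_eq_left h0]; norm_num
  · rw [min_eq_right h.le, max_eq_right h0.le]; exact h
lemma cl_gt {s θ : ℝ} (hθ : θ < 1) (h : θ < s) : θ < cl s := by
  unfold cl
  calc θ < min 1 s := lt_min hθ h
  _ ≤ max 0 (min 1 s) := le_max_right _ _
lemma cl_of_nonpos {s : ℝ} (h : s ≤ 0) : cl s = 0 := by
  unfold cl; rw [min_eq_right (h.trans zero_le_one), max_eq_left h]
lemma cl_of_one_le {s : ℝ} (h : 1 ≤ s) : cl s = 1 := by
  unfold cl; rw [min_eq_left h, max_eq_right zero_le_one]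
lemma cl_of_mem {s : ℝ} (h0 : 0 ≤ s) (h1 : s ≤ 1) : cl s = s := by
  unfold cl; rw [min_eq_right h1, max_eq_right h0]
@[simp] lemma cl_zero : cl 0 = 0 := cl_of_nonpos le_rfl
@[simp] lemma cl_one : cl 1 = 1 := cl_of_one_le le_rfl

lemma w_eq (x : MilnorFiberVW) : x.1.2 = (x.1.1)⁻¹ := by
  rw [inv_eq_one_div, eq_div_iff (v_ne x), mul_comm]; exact x.2

def sig (c : ℂ) (hc : c ≠ 0) (x : MilnorFiberVW) : MilnorFiberVW :=
  ⟨(c * x.1.1, c⁻¹ * x.1.2), by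
    have h : c * x.1.1 * (c⁻¹ * x.1.2) = (c * c⁻¹) * (x.1.1 * x.1.2) := by ring
    rw [h, mul_inv_cancel₀ hc, x.2, one_mul]⟩

lemma sig_cont (c : ℂ) (hc : c ≠ 0) : Continuous (sig c hc) := by
  apply Continuous.subtype_mk
  fun_prop


def Phi (p : MilnorFiberVW × ℝ) : OnePoint ℂ :=
  if 1 ≤ p.2 then ∞
  else (((cl p.2 / (1 - cl p.2) : ℝ) : ℂ) * (p.1.1.1 / (‖p.1.1.1‖ : ℝ)) : ℂ)

lemma Phi_rel : ∀ p q, suspRel MilnorFiberVW p q → Phi p = Phi q := by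
  rintro ⟨x, s⟩ ⟨y, t⟩ (⟨hs, ht⟩ | ⟨hs, ht⟩)
  · simp only [Phi]
    rw [if_neg (by simp; linarith), if_neg (by simp; linarith),
      cl_of_nonpos hs, cl_of_nonpos ht]
    norm_num
  · simp only [Phi, if_pos hs, if_pos ht]

lemma norm_uarg (x : MilnorFiberVW) : ‖(x.1.1 / (‖x.1.1‖ : ℝ) : ℂ)‖ = 1 := by
  rw [norm_div]
  rw [Complex.norm_real, Real.norm_eq_abs, _root_.abs_of_nonneg (norm_nonneg _)]
  exact div_self (norm_v_pos x).ne'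

lemma Phi_cont : Continuous Phi := by
  rw [continuous_iff_continuousAt]
  rintro ⟨x, t⟩
  rcases lt_or_ge t 1 with ht | ht
  · -- finite region
    have hop : IsOpen {q : MilnorFiberVW × ℝ | q.2 < 1} := isOpen_lt continuous_snd continuous_const
    have hev : Phi =ᶠ[𝓝 (x, t)] (fun q =>
        ((((cl q.2 / (1 - cl q.2) : ℝ) : ℂ) * (q.1.1.1 / (‖q.1.1.1‖ : ℝ)) : ℂ) : OnePoint ℂ)) := by
      filter_upwards [hop.mem_nhds ht] with q hq
      simp only [Phi, if_neg (not_le.mpr hq)]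
    have hf : ContinuousAt (fun q : MilnorFiberVW × ℝ =>
        (((cl q.2 / (1 - cl q.2) : ℝ) : ℂ) * (q.1.1.1 / (‖q.1.1.1‖ : ℝ)) : ℂ)) (x, t) := by
      have hden : ContinuousAt (fun q : MilnorFiberVW × ℝ => cl q.2 / (1 - cl q.2)) (x, t) :=
        ContinuousAt.div ((cl_cont.comp continuous_snd).continuousAt)
          ((continuous_const.sub (cl_cont.comp continuous_snd)).continuousAt)
          (sub_ne_zero.mpr (cl_lt_one ht).ne')
      apply ContinuousAt.mul (Complex.continuous_ofReal.continuousAt.comp hden)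
      exact ContinuousAt.div (by fun_prop) (by fun_prop)
        (Complex.ofReal_ne_zero.mpr (norm_v_pos x).ne')
    exact (OnePoint.continuous_coe.continuousAt.comp hf).congr hev.symm
  · -- tendsto infinity
    have hPhi : Phi (x, t) = ∞ := if_pos ht
    rw [ContinuousAt, hPhi]
    rw [OnePoint.hasBasis_nhds_infty.tendsto_right_iff]
    rintro s ⟨-, hsc⟩
    obtain ⟨R, hR0, hsR⟩ : ∃ R : ℝ, 0 ≤ R ∧ s ⊆ Metric.closedBall 0 R := by
      obtain ⟨R, hR⟩ := hsc.isBounded.subset_closedBall 0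
      exact ⟨max R 0, le_max_right _ _, hR.trans (Metric.closedBall_subset_closedBall (le_max_left _ _))⟩
    set θ : ℝ := (R + 1) / (R + 2) with hθdef
    have hθ1 : θ < 1 := by rw [hθdef, div_lt_one (by linarith)]; linarith
    have hθ0 : 0 ≤ θ := by positivity
    have hev : ∀ᶠ q : MilnorFiberVW × ℝ in 𝓝 (x, t), θ < q.2 := by
      have : Tendsto (fun q : MilnorFiberVW × ℝ => q.2) (𝓝 (x, t)) (𝓝 t) := continuous_snd.continuousAt
      exact this.eventually_const_lt (lt_of_lt_of_le hθ1 ht)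
    filter_upwards [hev] with q hq
    by_cases h1 : 1 ≤ q.2
    · right; simp [Phi, if_pos h1]
    · left
      push_neg at h1
      have hθpos : 0 < θ := by rw [hθdef]; positivity
      have hclθ : θ < cl q.2 := cl_gt hθ1 hq
      have hcl1 : cl q.2 < 1 := cl_lt_one h1
      set z : ℂ := (((cl q.2 / (1 - cl q.2) : ℝ) : ℂ) * (q.1.1.1 / (‖q.1.1.1‖ : ℝ)) : ℂ) with hzdef
      have hPq : Phi q = (z : OnePoint ℂ) := by
        rcases q with ⟨qx, qt⟩
        simp only [Phi, if_neg (not_le.mpr h1)]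
        rfl
      have hns : ‖z‖ = cl q.2 / (1 - cl q.2) := by
        rw [hzdef, norm_mul, norm_uarg, mul_one, Complex.norm_real, Real.norm_eq_abs,
          _root_.abs_of_nonneg (div_nonneg (cl_nonneg _) (by linarith))]
      have hgtR : R < cl q.2 / (1 - cl q.2) := by
        have h2 : 0 < 1 - cl q.2 := by linarith
        have h3 : 1 - cl q.2 < 1 - θ := by linarith
        have hR2 : (R:ℝ) + 2 ≠ 0 := by linarith
        have h4 : θ / (1 - θ) = R + 1 := by
          rw [hθdef]
          rw [show 1 - (R + 1) / (R + 2) = 1 / (R + 2) by field_simp; ring]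
          field_simp
        have h5 : θ / (1 - θ) ≤ cl q.2 / (1 - θ) :=
          (div_le_div_iff_of_pos_right (by linarith)).mpr hclθ.le
        have h6 : cl q.2 / (1 - θ) < cl q.2 / (1 - cl q.2) :=
          div_lt_div_of_pos_left (by linarith) h2 h3
        linarith
      have hzs : z ∈ sᶜ := by
        intro hmem
        have := hsR hmem
        rw [Metric.mem_closedBall, dist_zero_right, hns] at this
        linarith
      rw [hPq]
      exact ⟨z, hzs, rfl⟩
    done

/-! ### psi -/

def pt1 : MilnorFiberVW := ⟨(1, 1), by norm_num⟩

/-- point of `ℂ*` in the direction of `z` (with junk value at `0`). -/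
def e (z : ℂ) : ℂ := if z = 0 then 1 else z / (‖z‖ : ℝ)

lemma e_ne_zero (z : ℂ) : e z ≠ 0 := by
  unfold e
  split_ifs with h
  · exact one_ne_zero
  · exact div_ne_zero h (Complex.ofReal_ne_zero.mpr (norm_ne_zero_iff.mpr h))

lemma e_of_ne {z : ℂ} (h : z ≠ 0) : e z = z / (‖z‖ : ℝ) := if_neg h

lemma norm_e {z : ℂ} (h : z ≠ 0) : ‖e z‖ = 1 := by
  rw [e_of_ne h, norm_div, Complex.norm_real, Real.norm_eq_abs,
    _root_.abs_of_nonneg (norm_nonneg _)]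
  exact div_self (norm_ne_zero_iff.mpr h)

lemma e_mem_sphere {z : ℂ} (h : z ≠ 0) : e z ∈ Metric.sphere (0:ℂ) 1 := by
  simpa using norm_e h

lemma e_e {z : ℂ} (h : z ≠ 0) : e (e z) = e z := by
  rw [e_of_ne (e_ne_zero z), norm_e h]
  simp

def uF (z : ℂ) : MilnorFiberVW := ⟨(e z, (e z)⁻¹), mul_inv_cancel₀ (e_ne_zero z)⟩

@[simp] lemma uF_zero : uF 0 = ⟨(1, 1), by norm_num⟩ := by
  unfold uF e; simp

def hgt (z : ℂ) : ℝ := ‖z‖ / (1 + ‖z‖)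

lemma one_add_norm_pos (z : ℂ) : 0 < 1 + ‖z‖ := by positivity

@[simp] lemma hgt_zero : hgt 0 = 0 := by simp [hgt]
lemma hgt_nonneg (z : ℂ) : 0 ≤ hgt z := div_nonneg (norm_nonneg _) (one_add_norm_pos z).le
lemma hgt_lt_one (z : ℂ) : hgt z < 1 := by
  rw [hgt, div_lt_one (one_add_norm_pos z)]; linarith
lemma hgt_le_norm (z : ℂ) : hgt z ≤ ‖z‖ := by
  rw [hgt, div_le_iff₀ (one_add_norm_pos z)]
  nlinarith [norm_nonneg z]

def Psi : OnePoint ℂ → Susp MilnorFiberVW :=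
  Option.elim' (Quot.mk _ (pt1, 1)) fun z => Quot.mk _ (uF z, hgt z)

@[simp] lemma Psi_infty : Psi ∞ = Quot.mk _ (pt1, 1) := rfl
@[simp] lemma Psi_coe (z : ℂ) : Psi (z : OnePoint ℂ) = Quot.mk _ (uF z, hgt z) := rfl

lemma hgt_cont : Continuous hgt := by
  apply Continuous.div (by fun_prop) (by fun_prop)
  intro x
  exact (one_add_norm_pos x).ne'

lemma uF_continuousAt {z : ℂ} (h : z ≠ 0) : ContinuousAt uF z := by
  have he : ContinuousAt e z := by
    have : ContinuousAt (fun w : ℂ => w / (‖w‖ : ℝ)) z :=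
      ContinuousAt.div continuousAt_id (by fun_prop)
        (Complex.ofReal_ne_zero.mpr (norm_ne_zero_iff.mpr h))
    apply this.congr
    filter_upwards [isOpen_ne.mem_nhds h] with w hw
    rw [e_of_ne hw]
  apply (Topology.IsInducing.subtypeVal (t := {p : ℂ × ℂ | p.1 * p.2 = 1})).continuousAt_iff.mpr
  exact he.prodMk (he.inv₀ (e_ne_zero z))

/-- the compact "equator" circle inside the fiber -/
def Keq : Set MilnorFiberVW := uF '' Metric.sphere (0:ℂ) 1

lemma Keq_compact : IsCompact Keq := by
  apply (isCompact_sphere (0:ℂ) 1).image_of_continuousOn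
  intro z hz
  have hz0 : z ≠ 0 := by
    intro h; rw [h] at hz; simp at hz
  exact (uF_continuousAt hz0).continuousWithinAt

lemma uF_mem_Keq {z : ℂ} (h : z ≠ 0) : uF z ∈ Keq := by
  refine ⟨e z, e_mem_sphere h, ?_⟩
  unfold uF
  apply Subtype.ext
  simp only
  rw [e_e h]

lemma Psi_continuous : Continuous Psi := by
  rw [continuous_iff_continuousAt]
  intro y
  induction y using OnePoint.rec with
  | infty =>
    rw [OnePoint.continuousAt_infty']
    intro U hU
    obtain ⟨W, hWU, hWo, hWm⟩ := mem_nhds_iff.mp hU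
    set V : Set (MilnorFiberVW × ℝ) := Quot.mk _ ⁻¹' W with hVdef
    have hVo : IsOpen V := hWo.preimage continuous_quot_mk
    have hsat : ∀ (x : MilnorFiberVW) (s : ℝ), 1 ≤ s → (x, s) ∈ V := by
      intro x s hs
      have : Quot.mk (suspRel MilnorFiberVW) (x, s) = Quot.mk _ (pt1, 1) :=
        Quot.sound (Or.inr ⟨hs, le_rfl⟩)
      show (Quot.mk _ (x, s) : Susp MilnorFiberVW) ∈ W; rw [this]
      exact hWm
    have hsub : Keq ×ˢ ({1} : Set ℝ) ⊆ V := by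
      rintro ⟨x, s⟩ ⟨hx, hs⟩
      rw [mem_singleton_iff] at hs
      exact hsat x s hs.ge
    obtain ⟨W₁, W₂, hW₁o, hW₂o, hKW₁, h1W₂, hprod⟩ :=
      generalized_tube_lemma Keq_compact isCompact_singleton hVo hsub
    obtain ⟨ε, hε, hball⟩ := Metric.isOpen_iff.mp hW₂o 1 (h1W₂ rfl)
    rw [Filter.coclosedCompact_eq_cocompact, Filter.mem_map]
    have hmem : {z : ℂ | (1:ℝ)/ε < ‖z‖} ∈ cocompact ℂ := by
      rw [Filter.mem_cocompact]
      refine ⟨Metric.closedBall 0 (1/ε), isCompact_closedBall _ _, ?_⟩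
      intro z hz
      simp only [mem_compl_iff, Metric.mem_closedBall, dist_zero_right, not_le] at hz
      exact hz
    filter_upwards [hmem] with z hz
    have hz0 : z ≠ 0 := by
      intro h; rw [h, norm_zero] at hz
      have : (0:ℝ) < 1/ε := by positivity
      linarith
    have hh : hgt z ∈ Metric.ball (1:ℝ) ε := by
      rw [Metric.mem_ball, Real.dist_eq, abs_of_nonpos (by nlinarith [hgt_lt_one z])]
      have h1 : 1 - hgt z = 1 / (1 + ‖z‖) := by
        rw [hgt]; field_simp; ring
      rw [show -(hgt z - 1) = 1 - hgt z by ring, h1]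
      rw [div_lt_iff₀ (one_add_norm_pos z)]
      have : 1/ε < 1 + ‖z‖ := by linarith
      calc (1:ℝ) = ε * (1/ε) := by field_simp
      _ < ε * (1 + ‖z‖) := by
          apply mul_lt_mul_of_pos_left this hε
    show Psi (z : OnePoint ℂ) ∈ U
    rw [Psi_coe]
    apply hWU
    have : (uF z, hgt z) ∈ V := hprod ⟨hKW₁ (uF_mem_Keq hz0), hball hh⟩
    exact this
  | coe z =>
    have hiff := (OnePoint.isOpenEmbedding_coe (X := ℂ)).continuousAt_iff (g := Psi) (x := z)
    rw [← hiff]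
    by_cases hz0 : z = 0
    · subst hz0
      intro U hU
      obtain ⟨W, hWU, hWo, hWm⟩ := mem_nhds_iff.mp hU
      set V : Set (MilnorFiberVW × ℝ) := Quot.mk _ ⁻¹' W with hVdef
      have hVo : IsOpen V := hWo.preimage continuous_quot_mk
      have hsat : ∀ (x : MilnorFiberVW) (s : ℝ), s ≤ 0 → (x, s) ∈ V := by
        intro x s hs
        have : Quot.mk (suspRel MilnorFiberVW) (x, s)
            = Quot.mk _ (uF 0, hgt 0) := by
          apply Quot.sound
          exact Or.inl ⟨hs, by simp⟩
        show (Quot.mk _ (x, s) : Susp MilnorFiberVW) ∈ W; rw [this]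
        exact hWm
      have hsub : Keq ×ˢ ({0} : Set ℝ) ⊆ V := by
        rintro ⟨x, s⟩ ⟨hx, hs⟩
        rw [mem_singleton_iff] at hs
        exact hsat x s hs.le
      obtain ⟨W₁, W₂, hW₁o, hW₂o, hKW₁, h0W₂, hprod⟩ :=
        generalized_tube_lemma Keq_compact isCompact_singleton hVo hsub
      obtain ⟨ε, hε, hball⟩ := Metric.isOpen_iff.mp hW₂o 0 (h0W₂ rfl)
      rw [Filter.mem_map]
      filter_upwards [Metric.ball_mem_nhds (0:ℂ) hε] with z hz
      rw [Metric.mem_ball, dist_zero_right] at hz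
      show Psi (z : OnePoint ℂ) ∈ U
      rw [Psi_coe]
      apply hWU
      by_cases hzz : z = 0
      · subst hzz
        exact hsat (uF 0) (hgt 0) (by simp)
      · have hh : hgt z ∈ Metric.ball (0:ℝ) ε := by
          rw [Metric.mem_ball, dist_zero_right, Real.norm_eq_abs,
            _root_.abs_of_nonneg (hgt_nonneg z)]
          exact lt_of_le_of_lt (hgt_le_norm z) hz
        exact hprod ⟨hKW₁ (uF_mem_Keq hzz), hball hh⟩
    · have : ContinuousAt (fun w : ℂ => (Quot.mk _ (uF w, hgt w) : Susp MilnorFiberVW)) z :=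
        continuous_quot_mk.continuousAt.comp ((uF_continuousAt hz0).prodMk hgt_cont.continuousAt)
      exact this

/-! ### tau -/

def Tau (c : ℂ) : OnePoint ℂ → OnePoint ℂ := Option.map (fun z => c * z)

@[simp] lemma Tau_infty (c : ℂ) : Tau c ∞ = ∞ := rfl
@[simp] lemma Tau_coe (c z : ℂ) : Tau c (z : OnePoint ℂ) = ((c * z : ℂ) : OnePoint ℂ) := rfl

lemma Tau_cont (c : ℂ) (hc : ‖c‖ = 1) : Continuous (Tau c) := by
  rw [continuous_iff_continuousAt]
  intro y
  induction y using OnePoint.rec with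
  | infty =>
    rw [OnePoint.continuousAt_infty']
    have h1 : Tendsto (fun z : ℂ => c * z) (coclosedCompact ℂ) (coclosedCompact ℂ) := by
      rw [Filter.coclosedCompact_eq_cocompact]
      apply tendsto_cocompact_of_tendsto_dist_comp_atTop (0:ℂ)
      have : (fun z : ℂ => dist (c * z) 0) = fun z : ℂ => ‖z‖ := by
        funext z
        rw [dist_zero_right, norm_mul, hc, one_mul]
      rw [this]
      exact tendsto_norm_cocompact_atTop
    exact (OnePoint.tendsto_coe_infty.comp h1).congr fun z => rfl
  | coe z =>
    rw [← (OnePoint.isOpenEmbedding_coe (X := ℂ)).continuousAt_iff (g := Tau c) (x := z)]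
    exact (OnePoint.continuous_coe.comp (continuous_const.mul continuous_id)).continuousAt

/-! ### the suspension of sigma -/

def SigS (c : ℂ) (hc : c ≠ 0) : C(Susp MilnorFiberVW, Susp MilnorFiberVW) :=
  ⟨Quot.lift (fun p => Quot.mk _ (sig c hc p.1, p.2)) (by
      rintro ⟨x, s⟩ ⟨y, t⟩ (⟨hs, ht⟩ | ⟨hs, ht⟩)
      · exact Quot.sound (Or.inl ⟨hs, ht⟩)
      · exact Quot.sound (Or.inr ⟨hs, ht⟩)),
    continuous_quot_lift _ (continuous_quot_mk.comp
      (((sig_cont c hc).comp continuous_fst).prodMk continuous_snd))⟩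

@[simp] lemma SigS_mk (c : ℂ) (hc : c ≠ 0) (p : MilnorFiberVW × ℝ) :
    SigS c hc (Quot.mk _ p) = Quot.mk _ (sig c hc p.1, p.2) := rfl

def PhiC : C(Susp MilnorFiberVW, OnePoint ℂ) :=
  ⟨Quot.lift Phi Phi_rel, continuous_quot_lift _ Phi_cont⟩

@[simp] lemma PhiC_mk (p : MilnorFiberVW × ℝ) : PhiC (Quot.mk _ p) = Phi p := rfl

def PsiC : C(OnePoint ℂ, Susp MilnorFiberVW) := ⟨Psi, Psi_continuous⟩

/-! ### the homotopy H -/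

def Hpt (p : MilnorFiberVW × ℝ) (t : ℝ) : MilnorFiberVW × ℝ :=
  (⟨(((‖p.1.1.1‖ ^ (cl t - 1) : ℝ) : ℂ) * p.1.1.1,
     ((‖p.1.1.1‖ ^ (1 - cl t) : ℝ) : ℂ) * p.1.1.2), by
      have hr := norm_v_pos p.1
      have key : (‖p.1.1.1‖ ^ (cl t - 1) : ℝ) * ‖p.1.1.1‖ ^ (1 - cl t) = 1 := by
        rw [← Real.rpow_add hr]
        norm_num
      have h2 : ((‖p.1.1.1‖ ^ (cl t - 1) : ℝ) : ℂ) * p.1.1.1 *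
          (((‖p.1.1.1‖ ^ (1 - cl t) : ℝ) : ℂ) * p.1.1.2)
          = (((‖p.1.1.1‖ ^ (cl t - 1) : ℝ) * ‖p.1.1.1‖ ^ (1 - cl t) : ℝ) : ℂ)
            * (p.1.1.1 * p.1.1.2) := by push_cast; ring
      rw [h2, key, p.1.2]
      norm_num⟩,
   (1 - cl t) * cl p.2 + cl t * p.2)

def HF : (MilnorFiberVW × ℝ) × ℝ → Susp MilnorFiberVW := fun q => Quot.mk _ (Hpt q.1 q.2)

lemma HF_cont : Continuous HF := by
  apply continuous_quot_mk.comp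
  have hb : Continuous fun q : (MilnorFiberVW × ℝ) × ℝ => ‖q.1.1.1.1‖ := by fun_prop
  have h1 : Continuous fun q : (MilnorFiberVW × ℝ) × ℝ => (‖q.1.1.1.1‖ ^ (cl q.2 - 1) : ℝ) := by
    apply hb.rpow ((cl_cont.comp continuous_snd).sub continuous_const)
    intro q
    exact Or.inl (norm_v_pos q.1.1).ne'
  have h2 : Continuous fun q : (MilnorFiberVW × ℝ) × ℝ => (‖q.1.1.1.1‖ ^ (1 - cl q.2) : ℝ) := by
    apply hb.rpow (continuous_const.sub (cl_cont.comp continuous_snd))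
    intro q
    exact Or.inl (norm_v_pos q.1.1).ne'
  apply Continuous.prodMk
  · apply Continuous.subtype_mk
    apply Continuous.prodMk
    · exact (Complex.continuous_ofReal.comp h1).mul (by fun_prop)
    · exact (Complex.continuous_ofReal.comp h2).mul (by fun_prop)
  · exact (((continuous_const.sub (cl_cont.comp continuous_snd)).mul
      (cl_cont.comp (continuous_snd.comp continuous_fst))).add
      ((cl_cont.comp continuous_snd).mul (continuous_snd.comp continuous_fst)))

def HC0 : C((MilnorFiberVW × ℝ) × ℝ, Susp MilnorFiberVW) := ⟨HF, HF_cont⟩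

lemma Hpt_rel {p q : MilnorFiberVW × ℝ} (h : suspRel MilnorFiberVW p q) (t : ℝ) :
    suspRel MilnorFiberVW (Hpt p t) (Hpt q t) := by
  have hc0 := cl_nonneg t
  have hc1 := cl_le_one t
  rcases h with ⟨hs, ht⟩ | ⟨hs, ht⟩
  · left
    constructor
    · show (1 - cl t) * cl p.2 + cl t * p.2 ≤ 0
      rw [cl_of_nonpos hs]
      have := mul_nonpos_of_nonneg_of_nonpos hc0 hs
      linarith
    · show (1 - cl t) * cl q.2 + cl t * q.2 ≤ 0
      rw [cl_of_nonpos ht]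
      have := mul_nonpos_of_nonneg_of_nonpos hc0 ht
      linarith
  · right
    constructor
    · show 1 ≤ (1 - cl t) * cl p.2 + cl t * p.2
      rw [cl_of_one_le hs]
      nlinarith
    · show 1 ≤ (1 - cl t) * cl q.2 + cl t * q.2
      rw [cl_of_one_le ht]
      nlinarith

def HC : C(Susp MilnorFiberVW, C(ℝ, Susp MilnorFiberVW)) :=
  ⟨Quot.lift (fun p => HC0.curry p) (by
      intro p q h
      ext t
      exact Quot.sound (Hpt_rel h t)),
    continuous_quot_lift _ HC0.curry.continuous⟩

def Hfull : C(ℝ × Susp MilnorFiberVW, Susp MilnorFiberVW) :=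
  HC.uncurry.comp ((Homeomorph.prodComm ℝ (Susp MilnorFiberVW)) : C(ℝ × Susp MilnorFiberVW, Susp MilnorFiberVW × ℝ))

@[simp] lemma Hfull_mk (t : ℝ) (p : MilnorFiberVW × ℝ) :
    Hfull (t, Quot.mk _ p) = Quot.mk _ (Hpt p t) := by
  show HC.uncurry ((Homeomorph.prodComm ℝ (Susp MilnorFiberVW)) (t, Quot.mk _ p)) = _
  rw [Homeomorph.coe_prodComm]
  have hHC : HC (Quot.mk _ p) = HC0.curry p := rfl
  show HC (Quot.mk _ p) t = _
  rw [hHC, ContinuousMap.curry_apply]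
  rfl

/-! ### algebra: phi ∘ psi = id -/

lemma one_sub_hgt (z : ℂ) : 1 - hgt z = 1 / (1 + ‖z‖) := by
  rw [hgt]
  field_simp
  ring

lemma hgt_ratio (z : ℂ) : hgt z / (1 - hgt z) = ‖z‖ := by
  rw [one_sub_hgt, hgt]
  have := one_add_norm_pos z
  field_simp

lemma phi_psi (y : OnePoint ℂ) : PhiC (Psi y) = y := by
  induction y using OnePoint.rec with
  | infty =>
    show Phi (pt1, 1) = ∞
    exact if_pos le_rfl
  | coe z =>
    show Phi (uF z, hgt z) = (z : OnePoint ℂ)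
    rw [Phi, if_neg (not_le.mpr (hgt_lt_one z))]
    congr 1
    have h0 := hgt_nonneg z
    have h1 := (hgt_lt_one z).le
    rw [cl_of_mem h0 h1, hgt_ratio]
    by_cases hz : z = 0
    · subst hz
      simp
    · show (‖z‖ : ℂ) * ((uF z).1.1 / (‖(uF z).1.1‖ : ℝ)) = z
      show (‖z‖ : ℂ) * (e z / (‖e z‖ : ℝ)) = z
      rw [norm_e hz, e_of_ne hz]
      have hn : ((‖z‖ : ℝ) : ℂ) ≠ 0 := Complex.ofReal_ne_zero.mpr (norm_ne_zero_iff.mpr hz)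
      rw [Complex.ofReal_one, div_one]
      exact mul_div_cancel₀ z hn

/-! ### algebra: H is a homotopy from psi ∘ phi to id -/

lemma H_zero (x : Susp MilnorFiberVW) : Hfull (0, x) = PsiC (PhiC x) := by
  induction x using Quot.ind with
  | _ p =>
  obtain ⟨x, s⟩ := p
  rw [Hfull_mk]
  show _ = Psi (Phi (x, s))
  have hr := norm_v_pos x
  rcases le_or_gt 1 s with hs | hs
  · rw [Phi, if_pos hs]
    apply Quot.sound
    right
    constructor
    · show 1 ≤ (1 - cl (0:ℝ)) * cl s + cl (0:ℝ) * s
      simp [cl_of_one_le hs]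
    · exact le_rfl
  rcases le_or_gt s 0 with hs0 | hs0
  · rw [Phi, if_neg (not_le.mpr (lt_of_le_of_lt hs0 one_pos))]
    have : ((cl s / (1 - cl s) : ℝ) : ℂ) * (x.1.1 / (‖x.1.1‖ : ℝ)) = 0 := by
      rw [cl_of_nonpos hs0]
      norm_num
    rw [this]
    show _ = Quot.mk _ (uF 0, hgt 0)
    apply Quot.sound
    left
    constructor
    · show (1 - cl (0:ℝ)) * cl s + cl (0:ℝ) * s ≤ 0
      simp [cl_of_nonpos hs0]
    · simp
  · -- 0 < s < 1
    rw [Phi, if_neg (not_le.mpr hs)]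
    rw [cl_of_mem hs0.le hs.le]
    set q : ℝ := s / (1 - s) with hqdef
    have hq0 : 0 < q := div_pos hs0 (by linarith)
    set z : ℂ := (q : ℂ) * (x.1.1 / (‖x.1.1‖ : ℝ)) with hzdef
    have hnz : ‖z‖ = q := by
      rw [hzdef, norm_mul, norm_uarg, mul_one, Complex.norm_real, Real.norm_eq_abs,
        _root_.abs_of_nonneg hq0.le]
    have hz0 : z ≠ 0 := by
      rw [← norm_ne_zero_iff, hnz]; exact hq0.ne'
    show _ = Quot.mk _ (uF z, hgt z)
    have hez : e z = x.1.1 / (‖x.1.1‖ : ℝ) := by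
      rw [e_of_ne hz0, hnz, hzdef]
      exact mul_div_cancel_left₀ _ (Complex.ofReal_ne_zero.mpr hq0.ne')
    have hhz : hgt z = s := by
      rw [hgt, hnz, hqdef]
      have h1s : (0:ℝ) < 1 - s := by linarith
      field_simp
      ring
    congr 1
    refine Prod.ext ?_ ?_
    · apply Subtype.ext
      show ((((‖x.1.1‖ ^ (cl (0:ℝ) - 1) : ℝ) : ℂ) * x.1.1,
          ((‖x.1.1‖ ^ (1 - cl (0:ℝ)) : ℝ) : ℂ) * x.1.2) : ℂ × ℂ) = (e z, (e z)⁻¹)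
      rw [hez]
      have e1 : (‖x.1.1‖ ^ (cl (0:ℝ) - 1) : ℝ) = ‖x.1.1‖⁻¹ := by
        rw [cl_zero]; norm_num
        rw [Real.rpow_neg_one]
      have e2 : (‖x.1.1‖ ^ (1 - cl (0:ℝ)) : ℝ) = ‖x.1.1‖ := by
        rw [cl_zero]; norm_num
      rw [e1, e2]
      rw [Prod.mk.injEq]
      constructor
      · push_cast
        rw [inv_mul_eq_div]
      · rw [w_eq x, inv_div]
        rw [div_eq_mul_inv]
    · show (1 - cl (0:ℝ)) * cl s + cl (0:ℝ) * s = hgt z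
      rw [hhz, cl_zero, cl_of_mem hs0.le hs.le]
      ring

lemma H_one (x : Susp MilnorFiberVW) : Hfull (1, x) = x := by
  induction x using Quot.ind with
  | _ p =>
  obtain ⟨x, s⟩ := p
  rw [Hfull_mk]
  congr 1
  refine Prod.ext ?_ ?_
  · apply Subtype.ext
    show ((((‖x.1.1‖ ^ (cl (1:ℝ) - 1) : ℝ) : ℂ) * x.1.1,
        ((‖x.1.1‖ ^ (1 - cl (1:ℝ)) : ℝ) : ℂ) * x.1.2) : ℂ × ℂ) = (x.1.1, x.1.2)
    rw [cl_one]
    norm_num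
  · show (1 - cl (1:ℝ)) * cl s + cl (1:ℝ) * s = s
    rw [cl_one]
    ring

/-! ### equivariance -/

variable (c : ℂ) (hc : c ≠ 0)

lemma norm_sig_v (hcn : ‖c‖ = 1) (x : MilnorFiberVW) : ‖(sig c hc x).1.1‖ = ‖x.1.1‖ := by
  show ‖c * x.1.1‖ = ‖x.1.1‖
  rw [norm_mul, hcn, one_mul]

lemma H_equi (hcn : ‖c‖ = 1) (t : ℝ) (x : Susp MilnorFiberVW) :
    Hfull (t, SigS c hc x) = SigS c hc (Hfull (t, x)) := by
  induction x using Quot.ind with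
  | _ p =>
  obtain ⟨x, s⟩ := p
  rw [SigS_mk, Hfull_mk, Hfull_mk, SigS_mk]
  apply congrArg
  rw [Prod.mk.injEq]
  refine ⟨Subtype.ext ?_, rfl⟩
  show ((((‖(sig c hc x).1.1‖ ^ (cl t - 1) : ℝ) : ℂ) * (sig c hc x).1.1,
      ((‖(sig c hc x).1.1‖ ^ (1 - cl t) : ℝ) : ℂ) * (sig c hc x).1.2) : ℂ × ℂ)
    = (c * (((‖x.1.1‖ ^ (cl t - 1) : ℝ) : ℂ) * x.1.1),
       c⁻¹ * (((‖x.1.1‖ ^ (1 - cl t) : ℝ) : ℂ) * x.1.2))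
  rw [norm_sig_v c hc hcn x]
  rw [Prod.mk.injEq]
  constructor
  · show _ * (c * x.1.1) = _
    ring
  · show _ * (c⁻¹ * x.1.2) = _
    ring

lemma phi_equi (hcn : ‖c‖ = 1) (x : Susp MilnorFiberVW) : PhiC (SigS c hc x) = Tau c (PhiC x) := by
  induction x using Quot.ind with
  | _ p =>
  obtain ⟨x, s⟩ := p
  rw [SigS_mk, PhiC_mk, PhiC_mk]
  by_cases hs : 1 ≤ s
  · rw [Phi, Phi]
    simp only [if_pos hs]
    rfl
  · rw [Phi, Phi]
    simp only [if_neg hs]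
    rw [Tau_coe]
    congr 1
    rw [show ((sig c hc x, s) : MilnorFiberVW × ℝ).1.1.1 = c * x.1.1 from rfl]
    rw [show ‖c * x.1.1‖ = ‖x.1.1‖ by rw [norm_mul, hcn, one_mul]]
    ring

lemma psi_equi (hcn : ‖c‖ = 1) (y : OnePoint ℂ) : Psi (Tau c y) = SigS c hc (Psi y) := by
  induction y using OnePoint.rec with
  | infty =>
    show Quot.mk _ (pt1, 1) = Quot.mk _ (sig c hc pt1, 1)
    exact Quot.sound (Or.inr ⟨le_rfl, le_rfl⟩)
  | coe z =>
    rw [Tau_coe, Psi_coe, Psi_coe, SigS_mk]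
    by_cases hz : z = 0
    · subst hz
      rw [mul_zero]
      apply Quot.sound
      left
      constructor <;> simp
    · have hcz : c * z ≠ 0 := mul_ne_zero hc hz
      have hncz : ‖c * z‖ = ‖z‖ := by rw [norm_mul, hcn, one_mul]
      apply congrArg
      rw [Prod.mk.injEq]
      constructor
      · apply Subtype.ext
        show ((e (c * z), (e (c * z))⁻¹) : ℂ × ℂ) = (c * e z, c⁻¹ * (e z)⁻¹)
        have he : e (c * z) = c * e z := by
          rw [e_of_ne hcz, e_of_ne hz, hncz, mul_div_assoc]
        rw [he, mul_inv]
      · show hgt (c * z) = hgt z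
        rw [hgt, hgt, hncz]

end
end S12
end S12aux

open S12

/-- for `d = a + b` and `ζ = exp(2πi/d)`, the unreduced suspension of the
Milnor fiber `F = {vw = 1}` (with monodromy generated by `σ(v,w) = (ζᵃv, ζᵇw)`) is
`μ_d`-equivariantly homotopy equivalent to the representation sphere `S^V = ℂ ∪ {∞}`
of the one-dimensional representation on which `ζ` acts as multiplication by `ζᵃ`. -/
theorem suspension_milnor_fiber_vw_equiv_representation_sphere
    (a b d : ℕ) (ha : 0 < a) (hb : 0 < b) (hd : d = a + b)
    (ζ : ℂ) (hζ : ζ = Complex.exp (2 * Real.pi * Complex.I / d)) :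
    ∃ σ : MilnorFiberVW → MilnorFiberVW,
      Continuous σ ∧
      (∀ p : MilnorFiberVW,
        ((σ p : ℂ × ℂ)) = (ζ ^ a * (p : ℂ × ℂ).1, ζ ^ b * (p : ℂ × ℂ).2)) ∧
      ∃ σS : C(Susp MilnorFiberVW, Susp MilnorFiberVW),
        (∀ (x : MilnorFiberVW) (t : ℝ),
          σS (Quot.mk _ (x, t)) = Quot.mk _ (σ x, t)) ∧
      ∃ τ : C(OnePoint ℂ, OnePoint ℂ),
        τ ∞ = ∞ ∧ (∀ z : ℂ, τ (z : OnePoint ℂ) = ((ζ ^ a * z : ℂ) : OnePoint ℂ)) ∧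
      ∃ (φ : C(Susp MilnorFiberVW, OnePoint ℂ)) (ψ : C(OnePoint ℂ, Susp MilnorFiberVW)),
        (∀ x, φ (σS x) = τ (φ x)) ∧
        (∀ y, ψ (τ y) = σS (ψ y)) ∧
        (∃ H : C(ℝ × Susp MilnorFiberVW, Susp MilnorFiberVW),
          (∀ x, H (0, x) = ψ (φ x)) ∧ (∀ x, H (1, x) = x) ∧
          (∀ (t : ℝ) (x), H (t, σS x) = σS (H (t, x)))) ∧
        (∃ K : C(ℝ × OnePoint ℂ, OnePoint ℂ),
          (∀ y, K (0, y) = φ (ψ y)) ∧ (∀ y, K (1, y) = y) ∧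
          (∀ (t : ℝ) (y), K (t, τ y) = τ (K (t, y)))) := by
  have hd0 : (d : ℂ) ≠ 0 := by
    rw [hd]
    exact Nat.cast_ne_zero.mpr (by omega)
  have hζd : ζ ^ d = 1 := by
    rw [hζ, ← Complex.exp_nat_mul]
    rw [show (d : ℂ) * (2 * Real.pi * Complex.I / d) = 2 * Real.pi * Complex.I by
      field_simp]
    exact Complex.exp_two_pi_mul_I
  have hab : ζ ^ a * ζ ^ b = 1 := by rw [← pow_add, ← hd, hζd]
  have hnζ : ‖ζ‖ = 1 := by
    rw [hζ, show (2 * Real.pi * Complex.I / d : ℂ)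
        = ((2 * Real.pi / d : ℝ) : ℂ) * Complex.I by push_cast; ring]
    rw [Complex.norm_exp]
    simp
  set c := ζ ^ a with hcdef
  have hcn : ‖c‖ = 1 := by rw [hcdef, norm_pow, hnζ, one_pow]
  have hc : c ≠ 0 := by
    rw [← norm_ne_zero_iff, hcn]
    exact one_ne_zero
  have hbinv : c⁻¹ = ζ ^ b := inv_eq_of_mul_eq_one_right hab
  refine ⟨sig c hc, sig_cont c hc, ?_, SigS c hc, fun x t => rfl,
    ⟨Tau c, Tau_cont c hcn⟩, rfl, fun z => rfl,
    PhiC, PsiC, phi_equi c hc hcn, psi_equi c hc hcn,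
    ⟨Hfull, H_zero, H_one, H_equi c hc hcn⟩,
    ⟨⟨fun p => p.2, continuous_snd⟩, fun y => (phi_psi y).symm, fun y => rfl, fun t y => rfl⟩⟩
  intro p
  rw [show ((sig c hc p : ℂ × ℂ)) = (c * p.1.1, c⁻¹ * p.1.2) from rfl, hbinv]
end

section
/- Let n > 2, and consider the integer matrix A of size n × (n−1) (for n odd) given in the paper: A has −1 on the diagonal entries (j,j) for 1 ≤ j ≤ n−2, entries +1 at positions (j+2, j) for 1 ≤ j ≤ n−2, entry −2^{(n−1)/2} at position (n−1, n−1) and +2^{(n−1)/2} at position (n, n−1), all other entries zero. Then A : ℤ^{n−1} → ℤⁿ is injective, and its cokernel is isomorphic to ℤ ⊕ ℤ/2^{(n−1)/2}ℤ. -/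
namespace Push13

private lemma sum_point {n : ℕ} (c : ℕ) (hc : c < n) (f : Fin n → ℤ) :
    (∑ i : Fin n, if (i : ℕ) = c then f i else 0) = f ⟨c, hc⟩ := by
  rw [Finset.sum_eq_single (⟨c, hc⟩ : Fin n)]
  · simp
  · intro b _ hb
    exact if_neg fun h => hb (Fin.ext h)
  · intro h; exact absurd (Finset.mem_univ _) h


private lemma sum_pt {n : ℕ} (P : Fin n → Prop) [DecidablePred P] (v : Fin n → ℤ) (c : ℕ)
    (hc : c < n) (hiff : ∀ i : Fin n, P i ↔ (i : ℕ) = c) :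
    (∑ i : Fin n, if P i then v i else 0) = v ⟨c, hc⟩ := by
  rw [Finset.sum_congr rfl fun i _ => if_congr (hiff i) rfl rfl]
  exact sum_point c hc v

private lemma sum_zero {n : ℕ} (P : Fin n → Prop) [DecidablePred P] (v : Fin n → ℤ)
    (hnot : ∀ i : Fin n, ¬ P i) :
    (∑ i : Fin n, if P i then v i else 0) = 0 :=
  Finset.sum_eq_zero fun i _ => if_neg (hnot i)

section Main

variable {n : ℕ} (hn : 2 < n) (A : Matrix (Fin n) (Fin (n - 1)) ℤ)
  (hA : ∀ (i : Fin n) (j : Fin (n - 1)),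
      A i j =
        if (i : ℕ) = (j : ℕ) ∧ (j : ℕ) < n - 2 then -1
        else if (i : ℕ) = (j : ℕ) + 2 ∧ (j : ℕ) < n - 2 then 1
        else if (i : ℕ) = n - 2 ∧ (j : ℕ) = n - 2 then -(2 ^ ((n - 1) / 2))
        else if (i : ℕ) = n - 1 ∧ (j : ℕ) = n - 2 then 2 ^ ((n - 1) / 2)
        else 0)

include hn hA

private lemma row (x : Fin (n - 1) → ℤ) (i : Fin n) :
    A.mulVecLin x i =
      (if h : (i : ℕ) < n - 2 then -x ⟨i, by omega⟩ else 0)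
      + (if h : 2 ≤ (i : ℕ) then x ⟨(i : ℕ) - 2, by have := i.isLt; omega⟩ else 0)
      + (if (i : ℕ) = n - 2 then -(2 ^ ((n - 1) / 2)) * x ⟨n - 2, by omega⟩ else 0)
      + (if (i : ℕ) = n - 1 then (2 ^ ((n - 1) / 2)) * x ⟨n - 2, by omega⟩ else 0) := by
  have hmv : A.mulVecLin x i = ∑ j, A i j * x j := by
    simp [Matrix.mulVecLin_apply, Matrix.mulVec, dotProduct]
  have hi := i.isLt
  have split : ∀ j : Fin (n - 1), A i j * x j =
      (if (j : ℕ) = (i : ℕ) ∧ (i : ℕ) < n - 2 then -x j else 0)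
      + (if (j : ℕ) = (i : ℕ) - 2 ∧ 2 ≤ (i : ℕ) then x j else 0)
      + (if (j : ℕ) = n - 2 ∧ (i : ℕ) = n - 2 then -(2 ^ ((n - 1) / 2)) * x j else 0)
      + (if (j : ℕ) = n - 2 ∧ (i : ℕ) = n - 1 then (2 ^ ((n - 1) / 2)) * x j else 0) := by
    intro j
    have hj := j.isLt
    rw [hA]
    split_ifs <;> first | omega | ring
  rw [hmv, Finset.sum_congr rfl fun j _ => split j, Finset.sum_add_distrib,
    Finset.sum_add_distrib, Finset.sum_add_distrib]
  congr 1
  congr 1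
  congr 1
  · by_cases h1 : (i : ℕ) < n - 2
    · rw [dif_pos h1, ← sum_point (n := n - 1) (i : ℕ) (by omega) (fun j => -x j)]
      exact Finset.sum_congr rfl fun j _ => by simp [h1]
    · rw [dif_neg h1]
      refine Finset.sum_eq_zero fun j _ => if_neg ?_
      omega
  · by_cases h2 : 2 ≤ (i : ℕ)
    · rw [dif_pos h2, ← sum_point (n := n - 1) ((i : ℕ) - 2) (by omega) (fun j => x j)]
      exact Finset.sum_congr rfl fun j _ => by simp [h2]
    · rw [dif_neg h2]
      refine Finset.sum_eq_zero fun j _ => if_neg ?_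
      omega
  · by_cases h3 : (i : ℕ) = n - 2
    · rw [if_pos h3, ← sum_point (n := n - 1) (n - 2) (by omega) (fun j => -(2 ^ ((n - 1) / 2) : ℤ) * x j)]
      exact Finset.sum_congr rfl fun j _ => by simp [h3]
    · rw [if_neg h3]
      refine Finset.sum_eq_zero fun j _ => if_neg ?_
      omega
  · by_cases h4 : (i : ℕ) = n - 1
    · rw [if_pos h4, ← sum_point (n := n - 1) (n - 2) (by omega) (fun j => (2 ^ ((n - 1) / 2) : ℤ) * x j)]
      exact Finset.sum_congr rfl fun j _ => by simp [h4]
    · rw [if_neg h4]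
      refine Finset.sum_eq_zero fun j _ => if_neg ?_
      omega

private lemma colsum (j : Fin (n - 1)) : (∑ i : Fin n, A i j) = 0 := by
  have hj := j.isLt
  have split : ∀ i : Fin n, A i j =
      (if (i : ℕ) = (j : ℕ) ∧ (j : ℕ) < n - 2 then (-1 : ℤ) else 0)
      + (if (i : ℕ) = (j : ℕ) + 2 ∧ (j : ℕ) < n - 2 then 1 else 0)
      + (if (i : ℕ) = n - 2 ∧ (j : ℕ) = n - 2 then -(2 ^ ((n - 1) / 2)) else 0)
      + (if (i : ℕ) = n - 1 ∧ (j : ℕ) = n - 2 then 2 ^ ((n - 1) / 2) else 0) := by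
    intro i
    have hi := i.isLt
    rw [hA]
    split_ifs <;> first | omega | ring
  rw [Finset.sum_congr rfl fun i _ => split i, Finset.sum_add_distrib,
    Finset.sum_add_distrib, Finset.sum_add_distrib]
  by_cases hc : (j : ℕ) < n - 2
  · rw [sum_pt _ _ (j : ℕ) (by omega) (fun i => by constructor <;> (intro h; omega)),
      sum_pt _ _ ((j : ℕ) + 2) (by omega) (fun i => by constructor <;> (intro h; omega)),
      sum_zero _ _ (fun i => by omega), sum_zero _ _ (fun i => by omega)]
    ring
  · have hc2 : (j : ℕ) = n - 2 := by omega
    rw [sum_zero _ _ (fun i => by omega), sum_zero _ _ (fun i => by omega),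
      sum_pt _ _ (n - 2) (by omega) (fun i => by constructor <;> (intro h; omega)),
      sum_pt _ _ (n - 1) (by omega) (fun i => by constructor <;> (intro h; omega))]
    ring

private lemma colsum_even (hodd : n % 2 = 1) (j : Fin (n - 1)) :
    (∑ i : Fin n, if (i : ℕ) % 2 = 0 then A i j else 0)
      = (if (j : ℕ) = n - 2 then 2 ^ ((n - 1) / 2) else 0) := by
  have hj := j.isLt
  have split : ∀ i : Fin n, (if (i : ℕ) % 2 = 0 then A i j else 0) =
      (if (i : ℕ) = (j : ℕ) ∧ ((j : ℕ) < n - 2 ∧ (j : ℕ) % 2 = 0) then (-1 : ℤ) else 0)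
      + (if (i : ℕ) = (j : ℕ) + 2 ∧ ((j : ℕ) < n - 2 ∧ (j : ℕ) % 2 = 0) then 1 else 0)
      + (if (i : ℕ) = n - 1 ∧ (j : ℕ) = n - 2 then 2 ^ ((n - 1) / 2) else 0) := by
    intro i
    have hi := i.isLt
    rw [hA]
    split_ifs <;> first | omega | ring
  rw [Finset.sum_congr rfl fun i _ => split i, Finset.sum_add_distrib, Finset.sum_add_distrib]
  by_cases hc : (j : ℕ) < n - 2 ∧ (j : ℕ) % 2 = 0
  · rw [sum_pt _ _ (j : ℕ) (by omega) (fun i => by constructor <;> (intro h; omega)),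
      sum_pt _ _ ((j : ℕ) + 2) (by omega) (fun i => by constructor <;> (intro h; omega)),
      sum_zero _ _ (fun i => by omega), if_neg (by omega : ¬ (j : ℕ) = n - 2)]
    ring
  · rw [sum_zero _ _ (fun i => by omega), sum_zero _ _ (fun i => by omega)]
    by_cases hc2 : (j : ℕ) = n - 2
    · rw [sum_pt _ _ (n - 1) (by omega) (fun i => by constructor <;> (intro h; omega)),
        if_pos hc2]
      ring
    · rw [sum_zero _ _ (fun i => by omega), if_neg hc2]
      ring

private lemma sum_mulVec (x : Fin (n - 1) → ℤ) : (∑ i : Fin n, A.mulVecLin x i) = 0 := by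
  have : ∀ i : Fin n, A.mulVecLin x i = ∑ j, A i j * x j := by
    intro i
    simp [Matrix.mulVecLin_apply, Matrix.mulVec, dotProduct]
  rw [Finset.sum_congr rfl fun i _ => this i, Finset.sum_comm]
  refine Finset.sum_eq_zero fun j _ => ?_
  rw [← Finset.sum_mul, colsum hn A hA j, zero_mul]

private lemma sum_even_mulVec (hodd : n % 2 = 1) (x : Fin (n - 1) → ℤ) :
    (∑ i : Fin n, if (i : ℕ) % 2 = 0 then A.mulVecLin x i else 0)
      = 2 ^ ((n - 1) / 2) * x ⟨n - 2, by omega⟩ := by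
  have h1 : ∀ i : Fin n, (if (i : ℕ) % 2 = 0 then A.mulVecLin x i else 0)
      = ∑ j, (if (i : ℕ) % 2 = 0 then A i j else 0) * x j := by
    intro i
    split_ifs with h
    · simp [Matrix.mulVecLin_apply, Matrix.mulVec, dotProduct, h]
    · simp [h]
  rw [Finset.sum_congr rfl fun i _ => h1 i, Finset.sum_comm]
  have h2 : ∀ j : Fin (n - 1), (∑ i : Fin n, (if (i : ℕ) % 2 = 0 then A i j else 0) * x j)
      = (if (j : ℕ) = n - 2 then (2 ^ ((n - 1) / 2) : ℤ) * x j else 0) := by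
    intro j
    rw [← Finset.sum_mul, colsum_even hn A hA hodd j]
    split_ifs <;> ring
  rw [Finset.sum_congr rfl fun j _ => h2 j, sum_point (n := n - 1) (n - 2) (by omega) (fun j => (2 ^ ((n - 1) / 2) : ℤ) * x j)]

set_option maxHeartbeats 1600000 in
private lemma inj : Function.Injective A.mulVecLin := by
  rw [← LinearMap.ker_eq_bot, LinearMap.ker_eq_bot']
  intro x hx
  have key : ∀ v : ℕ, ∀ j : Fin (n - 1), (j : ℕ) = v → x j = 0 := by
    intro v
    induction v using Nat.strong_induction_on with
    | _ v ih =>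
      intro j hjv
      have hj := j.isLt
      by_cases hlt : (j : ℕ) < n - 2
      · have h1 : A.mulVecLin x ⟨(j : ℕ), by omega⟩ = 0 := by rw [hx]; rfl
        rw [row hn A hA] at h1
        simp only [Fin.val_mk] at h1
        have hne2 : ¬ ((j : ℕ) = n - 2) := by omega
        have hne3 : ¬ ((j : ℕ) = n - 1) := by omega
        rw [dif_pos hlt, if_neg hne2, if_neg hne3] at h1
        simp only [Fin.eta] at h1
        by_cases h2 : 2 ≤ (j : ℕ)
        · rw [dif_pos h2] at h1
          have hz := ih ((j : ℕ) - 2) (by omega) ⟨(j : ℕ) - 2, by omega⟩ rfl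
          rw [hz] at h1
          linarith
        · rw [dif_neg h2] at h1
          linarith
      · have hv : (j : ℕ) = n - 2 := by omega
        have h1 : A.mulVecLin x ⟨n - 1, by omega⟩ = 0 := by rw [hx]; rfl
        rw [row hn A hA] at h1
        simp only [Fin.val_mk] at h1
        have e1 : ¬ (n - 1 < n - 2) := by omega
        have e2 : 2 ≤ n - 1 := by omega
        have e3 : ¬ (n - 1 = n - 2) := by omega
        rw [dif_neg e1, dif_pos e2, if_neg e3, if_true] at h1
        have hz := ih (n - 1 - 2) (by omega) ⟨n - 1 - 2, by omega⟩ rfl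
        rw [hz] at h1
        have h2 : (2 : ℤ) ^ ((n - 1) / 2) * x ⟨n - 2, by omega⟩ = 0 := by linarith
        have h3 : x ⟨n - 2, by omega⟩ = 0 :=
          (mul_eq_zero.mp h2).resolve_left (pow_ne_zero _ (by norm_num))
        have hje : j = ⟨n - 2, by omega⟩ := Fin.ext hv
        rw [hje]
        exact h3
  funext j
  exact key (j : ℕ) j rfl

end Main

private def S (n : ℕ) (y : Fin n → ℤ) (t : ℕ) : ℤ :=
  ∑ k : Fin n, if (k : ℕ) ≤ t ∧ (k : ℕ) % 2 = t % 2 then y k else 0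

private lemma S_step {n : ℕ} (y : Fin n → ℤ) (t : ℕ) (h2 : 2 ≤ t) (hlt : t < n) :
    S n y t = S n y (t - 2) + y ⟨t, hlt⟩ := by
  unfold S
  have pw : ∀ k : Fin n, (if (k : ℕ) ≤ t ∧ (k : ℕ) % 2 = t % 2 then y k else 0)
      = (if (k : ℕ) ≤ t - 2 ∧ (k : ℕ) % 2 = (t - 2) % 2 then y k else 0)
        + (if (k : ℕ) = t then y k else 0) := by
    intro k
    split_ifs <;> first | omega | ring
  rw [Finset.sum_congr rfl fun k _ => pw k, Finset.sum_add_distrib, sum_point (n := n) t hlt y]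

private lemma S_base {n : ℕ} (y : Fin n → ℤ) (t : ℕ) (h2 : t < 2) (hlt : t < n) :
    S n y t = y ⟨t, hlt⟩ := by
  unfold S
  exact sum_pt _ y t hlt (fun k => by omega)

private lemma total_split {n : ℕ} (y : Fin n → ℤ) :
    (∑ i : Fin n, y i) = (∑ i : Fin n, if (i : ℕ) % 2 = 0 then y i else 0)
      + (∑ i : Fin n, if (i : ℕ) % 2 = 1 then y i else 0) := by
  rw [← Finset.sum_add_distrib]
  refine Finset.sum_congr rfl fun i _ => ?_
  split_ifs <;> first | omega | ring

private lemma se_split {n : ℕ} (hn : 2 < n) (hodd : n % 2 = 1) (y : Fin n → ℤ) :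
    (∑ i : Fin n, if (i : ℕ) % 2 = 0 then y i else 0)
      = S n y (n - 3) + y ⟨n - 1, by omega⟩ := by
  unfold S
  have pw : ∀ i : Fin n, (if (i : ℕ) % 2 = 0 then y i else 0)
      = (if (i : ℕ) ≤ n - 3 ∧ (i : ℕ) % 2 = (n - 3) % 2 then y i else 0)
        + (if (i : ℕ) = n - 1 then y i else 0) := by
    intro i
    have hi := i.isLt
    split_ifs <;> first | omega | ring
  rw [Finset.sum_congr rfl fun i _ => pw i, Finset.sum_add_distrib,
    sum_point (n := n) (n - 1) (by omega) y]

private lemma so_split {n : ℕ} (hn : 4 < n) (hodd : n % 2 = 1) (y : Fin n → ℤ) :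
    (∑ i : Fin n, if (i : ℕ) % 2 = 1 then y i else 0)
      = S n y (n - 4) + y ⟨n - 2, by omega⟩ := by
  unfold S
  have pw : ∀ i : Fin n, (if (i : ℕ) % 2 = 1 then y i else 0)
      = (if (i : ℕ) ≤ n - 4 ∧ (i : ℕ) % 2 = (n - 4) % 2 then y i else 0)
        + (if (i : ℕ) = n - 2 then y i else 0) := by
    intro i
    have hi := i.isLt
    split_ifs <;> first | omega | ring
  rw [Finset.sum_congr rfl fun i _ => pw i, Finset.sum_add_distrib,
    sum_point (n := n) (n - 2) (by omega) y]

private def sumL (n : ℕ) : (Fin n → ℤ) →ₗ[ℤ] ℤ where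
  toFun y := ∑ i : Fin n, y i
  map_add' y z := Finset.sum_add_distrib
  map_smul' c y := by simp [Finset.mul_sum]

private def seL (n : ℕ) : (Fin n → ℤ) →ₗ[ℤ] ℤ where
  toFun y := ∑ i : Fin n, if (i : ℕ) % 2 = 0 then y i else 0
  map_add' y z := by
    rw [← Finset.sum_add_distrib]
    exact Finset.sum_congr rfl fun i _ => by split_ifs <;> simp
  map_smul' c y := by
    simp only [RingHom.id_apply, smul_eq_mul, Pi.smul_apply]
    rw [Finset.mul_sum]
    exact Finset.sum_congr rfl fun i _ => by split_ifs <;> simp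

private def phi (n N : ℕ) : (Fin n → ℤ) →ₗ[ℤ] ℤ × ZMod N :=
  (sumL n).prod ((Int.castAddHom (ZMod N)).toIntLinearMap.comp (seL n))

private lemma phi_apply (n N : ℕ) (y : Fin n → ℤ) :
    phi n N y = (∑ i : Fin n, y i, ((∑ i : Fin n, if (i : ℕ) % 2 = 0 then y i else 0 : ℤ) : ZMod N)) := rfl

private lemma phi_surj {n : ℕ} (hn : 2 < n) (hodd : n % 2 = 1) (N : ℕ) [NeZero N] :
    Function.Surjective (phi n N) := by
  rintro ⟨a, b⟩
  set yv : Fin n → ℤ := fun i => if (i : ℕ) = n - 2 then a - (b.val : ℤ)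
    else if (i : ℕ) = n - 1 then (b.val : ℤ) else 0 with hyv
  refine ⟨yv, ?_⟩
  rw [phi_apply]
  have h1 : (∑ i : Fin n, yv i) = a := by
    have pw : ∀ i : Fin n, yv i
        = (if (i : ℕ) = n - 2 then a - (b.val : ℤ) else 0)
          + (if (i : ℕ) = n - 1 then (b.val : ℤ) else 0) := by
      intro i
      simp only [hyv]
      split_ifs <;> first | omega | ring
    rw [Finset.sum_congr rfl fun i _ => pw i, Finset.sum_add_distrib,
      sum_pt _ _ (n - 2) (by omega) (fun i => Iff.rfl),
      sum_pt _ _ (n - 1) (by omega) (fun i => Iff.rfl)]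
    ring
  have h2 : (∑ i : Fin n, if (i : ℕ) % 2 = 0 then yv i else 0) = (b.val : ℤ) := by
    have pw : ∀ i : Fin n, (if (i : ℕ) % 2 = 0 then yv i else 0)
        = (if (i : ℕ) = n - 1 then (b.val : ℤ) else 0) := by
      intro i
      simp only [hyv]
      split_ifs <;> first | omega | ring
    rw [Finset.sum_congr rfl fun i _ => pw i,
      sum_pt _ _ (n - 1) (by omega) (fun i => Iff.rfl)]
  rw [h1, h2]
  simp [ZMod.natCast_val, ZMod.cast_id]

section Main2

variable {n : ℕ} (hn : 2 < n) (A : Matrix (Fin n) (Fin (n - 1)) ℤ)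
  (hA : ∀ (i : Fin n) (j : Fin (n - 1)),
      A i j =
        if (i : ℕ) = (j : ℕ) ∧ (j : ℕ) < n - 2 then -1
        else if (i : ℕ) = (j : ℕ) + 2 ∧ (j : ℕ) < n - 2 then 1
        else if (i : ℕ) = n - 2 ∧ (j : ℕ) = n - 2 then -(2 ^ ((n - 1) / 2))
        else if (i : ℕ) = n - 1 ∧ (j : ℕ) = n - 2 then 2 ^ ((n - 1) / 2)
        else 0)

include hn hA

private lemma ker_sub (hodd : n % 2 = 1) (y : Fin n → ℤ)
    (h0 : (∑ i, y i) = 0)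
    (hdvd : ((2 : ℤ) ^ ((n - 1) / 2)) ∣ (∑ i : Fin n, if (i : ℕ) % 2 = 0 then y i else 0)) :
    ∃ x, A.mulVecLin x = y := by
  set se : ℤ := ∑ i : Fin n, if (i : ℕ) % 2 = 0 then y i else 0 with hse
  set x : Fin (n - 1) → ℤ :=
    fun j => if (j : ℕ) < n - 2 then -S n y (j : ℕ) else se / 2 ^ ((n - 1) / 2) with hxdef
  have hxlt : ∀ (c : ℕ) (h : c < n - 1), c < n - 2 → x ⟨c, h⟩ = -S n y c := by
    intro c h hc
    rw [hxdef]
    exact if_pos hc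
  have hxge : ∀ (c : ℕ) (h : c < n - 1), ¬ c < n - 2 → x ⟨c, h⟩ = se / 2 ^ ((n - 1) / 2) := by
    intro c h hc
    rw [hxdef]
    exact if_neg hc
  have hmul : (2 : ℤ) ^ ((n - 1) / 2) * (se / 2 ^ ((n - 1) / 2)) = se :=
    Int.mul_ediv_cancel' hdvd
  have htot : (0 : ℤ) = se + (∑ i : Fin n, if (i : ℕ) % 2 = 1 then y i else 0) := by
    rw [hse, ← total_split, h0]
  refine ⟨x, ?_⟩
  funext i
  have hi := i.isLt
  rw [row hn A hA]
  by_cases h1 : (i : ℕ) < n - 2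
  · rw [dif_pos h1, hxlt (i : ℕ) (by omega) h1, if_neg (show ¬ ((i : ℕ) = n - 2) from by omega), if_neg (show ¬ ((i : ℕ) = n - 1) from by omega)]
    by_cases h2 : 2 ≤ (i : ℕ)
    · rw [dif_pos h2, hxlt ((i : ℕ) - 2) (by omega) (by omega)]
      have hst := S_step y (i : ℕ) h2 (by omega)
      simp only [Fin.eta] at hst
      linarith
    · rw [dif_neg h2]
      have hb := S_base y (i : ℕ) (by omega) (by omega)
      simp only [Fin.eta] at hb
      linarith
  · by_cases h3 : (i : ℕ) = n - 2
    · rw [dif_neg h1, if_pos h3, if_neg (show ¬ ((i : ℕ) = n - 1) from by omega), hxge (n - 2) (by omega) (by omega)]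
      by_cases h2 : 2 ≤ (i : ℕ)
      · rw [dif_pos h2, hxlt ((i : ℕ) - 2) (by omega) (by omega)]
        have hso := so_split (by omega) hodd y
        have hie : (⟨n - 2, by omega⟩ : Fin n) = i := Fin.ext h3.symm
        rw [hie] at hso
        have hc2 : (i : ℕ) - 2 = n - 4 := by omega
        rw [hc2]
        linarith
      · rw [dif_neg h2]
        have hso : (∑ k : Fin n, if (k : ℕ) % 2 = 1 then y k else 0) = y ⟨n - 2, by omega⟩ :=
          sum_pt _ y (n - 2) (by omega) (fun k => by have := k.isLt; omega)
        have hie : (⟨n - 2, by omega⟩ : Fin n) = i := Fin.ext h3.symm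
        rw [hie] at hso
        linarith
    · have h4 : (i : ℕ) = n - 1 := by omega
      rw [dif_neg h1, if_neg (show ¬ ((i : ℕ) = n - 2) from by omega), if_pos h4,
        dif_pos (show 2 ≤ (i : ℕ) by omega), hxlt ((i : ℕ) - 2) (by omega) (by omega), hxge (n - 2) (by omega) (by omega)]
      have hses := se_split hn hodd y
      have hie : (⟨n - 1, by omega⟩ : Fin n) = i := Fin.ext h4.symm
      rw [hie, ← hse] at hses
      have hc2 : (i : ℕ) - 2 = n - 3 := by omega
      rw [hc2]
      linarith

end Main2

end Push13

/-- for odd `n > 2`, the integer matrix `A : ℤ^{n−1} → ℤⁿ` from the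
push-forward computation is injective with cokernel `ℤ ⊕ ℤ/2^{(n−1)/2}ℤ`. -/
theorem pushforward_matrix_odd
    (n : ℕ) (hn : 2 < n) (hodd : Odd n)
    (A : Matrix (Fin n) (Fin (n - 1)) ℤ)
    (hA : ∀ (i : Fin n) (j : Fin (n - 1)),
      A i j =
        if (i : ℕ) = (j : ℕ) ∧ (j : ℕ) < n - 2 then -1
        else if (i : ℕ) = (j : ℕ) + 2 ∧ (j : ℕ) < n - 2 then 1
        else if (i : ℕ) = n - 2 ∧ (j : ℕ) = n - 2 then -(2 ^ ((n - 1) / 2))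
        else if (i : ℕ) = n - 1 ∧ (j : ℕ) = n - 2 then 2 ^ ((n - 1) / 2)
        else 0) :
    Function.Injective A.mulVecLin ∧
      Nonempty (((Fin n → ℤ) ⧸ LinearMap.range A.mulVecLin) ≃ₗ[ℤ]
        ℤ × ZMod (2 ^ ((n - 1) / 2))) := by
  have hodd' : n % 2 = 1 := Nat.odd_iff.mp hodd
  haveI : NeZero (2 ^ ((n - 1) / 2)) := ⟨pow_ne_zero _ (by norm_num)⟩
  refine ⟨Push13.inj hn A hA, ⟨?_⟩⟩
  have hker : LinearMap.range A.mulVecLin = LinearMap.ker (Push13.phi n (2 ^ ((n - 1) / 2))) := by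
    apply le_antisymm
    · rintro _ ⟨x, rfl⟩
      rw [LinearMap.mem_ker, Push13.phi_apply]
      have h1 := Push13.sum_mulVec hn A hA x
      have h2 := Push13.sum_even_mulVec hn A hA hodd' x
      rw [h1, h2, Prod.mk_eq_zero]
      refine ⟨rfl, ?_⟩
      have hz : ((2 : ZMod (2 ^ ((n - 1) / 2))) ^ ((n - 1) / 2)) = 0 := by
        have := ZMod.natCast_self (2 ^ ((n - 1) / 2))
        push_cast at this
        exact this
      push_cast
      rw [hz, zero_mul]
    · intro y hy
      rw [LinearMap.mem_ker, Push13.phi_apply, Prod.mk_eq_zero] at hy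
      obtain ⟨hy1, hy2⟩ := hy
      have hdvd : ((2 : ℤ) ^ ((n - 1) / 2)) ∣
          (∑ i : Fin n, if (i : ℕ) % 2 = 0 then y i else 0) := by
        have := (ZMod.intCast_zmod_eq_zero_iff_dvd _ _).mp hy2
        push_cast at this
        exact_mod_cast this
      exact Push13.ker_sub hn A hA hodd' y hy1 hdvd
  exact (Submodule.quotEquivOfEq _ _ hker).trans
    ((Push13.phi n (2 ^ ((n - 1) / 2))).quotKerEquivOfSurjective (Push13.phi_surj hn hodd' _))
end

section
/- Let n > 2 be even, and consider the integer n × n matrix B with entries: B(j,j) = −1 for 1 ≤ j ≤ n−2, B(j+2, j) = 1 for 1 ≤ j ≤ n−2, B(n−1, n−1) = B(n−1, n) = −2^{(n−2)/2}, B(n, n−1) = B(n, n) = 2^{(n−2)/2}, all other entries zero. Then the kernel of B : ℤⁿ → ℤⁿ is isomorphic to ℤ, and the cokernel of B is isomorphic to ℤ ⊕ ℤ/2^{(n−2)/2}ℤ. -/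
lemma sum_ite_val {n : ℕ} (c : ℕ) (hc : c < n) (f : Fin n → ℤ) :
    (∑ i : Fin n, if (i : ℕ) = c then f i else 0) = f ⟨c, hc⟩ := by
  rw [Finset.sum_eq_single_of_mem ⟨c, hc⟩ (Finset.mem_univ _)]
  · rw [if_pos rfl]
  · intro b _ hb
    rw [if_neg]
    exact fun h => hb (Fin.ext h)

lemma rowsum3 {n : ℕ} (x : Fin n → ℤ) (v1 v2 v3 : ℤ) (c1 c2 c3 : ℕ)
    (h1 : c1 < n) (h2 : c2 < n) (h3 : c3 < n)
    (f : Fin n → ℤ)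
    (hf : ∀ j : Fin n, f j =
      (if (j : ℕ) = c1 then v1 * x j else 0) +
      (if (j : ℕ) = c2 then v2 * x j else 0) +
      (if (j : ℕ) = c3 then v3 * x j else 0)) :
    (∑ j : Fin n, f j) = v1 * x ⟨c1, h1⟩ + v2 * x ⟨c2, h2⟩ + v3 * x ⟨c3, h3⟩ := by
  rw [Finset.sum_congr rfl fun j _ => hf j, Finset.sum_add_distrib, Finset.sum_add_distrib,
    sum_ite_val c1 h1 (fun j => v1 * x j), sum_ite_val c2 h2 (fun j => v2 * x j),
    sum_ite_val c3 h3 (fun j => v3 * x j)]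

lemma bkey (n : ℕ) (hn : 2 < n) (heven : Even n)
    (B : Matrix (Fin n) (Fin n) ℤ)
    (hB : ∀ (i j : Fin n),
      B i j =
        if (i : ℕ) = (j : ℕ) ∧ (j : ℕ) < n - 2 then -1
        else if (i : ℕ) = (j : ℕ) + 2 ∧ (j : ℕ) < n - 2 then 1
        else if (i : ℕ) = n - 2 ∧ ((j : ℕ) = n - 2 ∨ (j : ℕ) = n - 1) then
          -(2 ^ ((n - 2) / 2))
        else if (i : ℕ) = n - 1 ∧ ((j : ℕ) = n - 2 ∨ (j : ℕ) = n - 1) then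
          2 ^ ((n - 2) / 2)
        else 0)
    (x : Fin n → ℤ) (i : Fin n) :
    B.mulVec x i =
      (if h : 2 ≤ (i : ℕ) then x ⟨(i : ℕ) - 2, by omega⟩ else 0) +
      (if (i : ℕ) < n - 2 then -x i
       else (if (i : ℕ) = n - 2 then -(2 ^ ((n - 2) / 2)) else 2 ^ ((n - 2) / 2)) *
         (x ⟨n - 2, by omega⟩ + x ⟨n - 1, by omega⟩)) := by
  have hn4 : 4 ≤ n := by obtain ⟨m, hm⟩ := heven; omega
  have hiv := i.isLt
  rw [Matrix.mulVec, dotProduct]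
  rcases lt_or_ge (i : ℕ) (n - 2) with hi | hi
  · rcases lt_or_ge (i : ℕ) 2 with h2 | h2
    · rw [rowsum3 x (-1) 0 0 (i : ℕ) (n - 2) (n - 1) (by omega) (by omega) (by omega)
        (fun j => B i j * x j)
        (fun j => by have hjv := j.isLt; show B i j * x j = _; rw [hB i j]; split_ifs <;> first | ring1 | omega)]
      rw [dif_neg (by omega), if_pos hi, Fin.eta]
      ring1
    · rw [rowsum3 x 1 (-1) 0 ((i : ℕ) - 2) (i : ℕ) (n - 1) (by omega) (by omega) (by omega)
        (fun j => B i j * x j)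
        (fun j => by have hjv := j.isLt; show B i j * x j = _; rw [hB i j]; split_ifs <;> first | ring1 | omega)]
      rw [dif_pos h2, if_pos hi, Fin.eta]
      ring1
  · rcases (by omega : (i : ℕ) = n - 2 ∨ (i : ℕ) = n - 1) with hi2 | hi2
    · rw [rowsum3 x 1 (-(2 ^ ((n - 2) / 2))) (-(2 ^ ((n - 2) / 2))) ((i : ℕ) - 2) (n - 2) (n - 1)
        (by omega) (by omega) (by omega)
        (fun j => B i j * x j)
        (fun j => by have hjv := j.isLt; show B i j * x j = _; rw [hB i j]; split_ifs <;> first | ring1 | omega)]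
      rw [dif_pos (by omega), if_neg (by omega), if_pos hi2]
      ring1
    · rw [rowsum3 x 1 (2 ^ ((n - 2) / 2)) (2 ^ ((n - 2) / 2)) ((i : ℕ) - 2) (n - 2) (n - 1)
        (by omega) (by omega) (by omega)
        (fun j => B i j * x j)
        (fun j => by have hjv := j.isLt; show B i j * x j = _; rw [hB i j]; split_ifs <;> first | ring1 | omega)]
      rw [dif_pos (by omega), if_neg (by omega), if_neg (by omega)]
      ring1

lemma kerchar (n : ℕ) (hn : 2 < n) (heven : Even n)
    (B : Matrix (Fin n) (Fin n) ℤ)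
    (hB : ∀ (i j : Fin n),
      B i j =
        if (i : ℕ) = (j : ℕ) ∧ (j : ℕ) < n - 2 then -1
        else if (i : ℕ) = (j : ℕ) + 2 ∧ (j : ℕ) < n - 2 then 1
        else if (i : ℕ) = n - 2 ∧ ((j : ℕ) = n - 2 ∨ (j : ℕ) = n - 1) then
          -(2 ^ ((n - 2) / 2))
        else if (i : ℕ) = n - 1 ∧ ((j : ℕ) = n - 2 ∨ (j : ℕ) = n - 1) then
          2 ^ ((n - 2) / 2)
        else 0)
    (x : Fin n → ℤ) (hx : B.mulVec x = 0) :
    ∀ k, k < n - 2 → ∀ (h : k < n), x ⟨k, h⟩ = 0 := by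
  have hn4 : 4 ≤ n := by obtain ⟨m, hm⟩ := heven; omega
  intro k
  induction k using Nat.strong_induction_on with
  | _ k ih =>
    intro hk h
    have h0 := congrFun hx ⟨k, h⟩
    rw [bkey n hn heven B hB x ⟨k, h⟩] at h0
    simp only [Pi.zero_apply] at h0
    rw [if_pos (show ((⟨k, h⟩ : Fin n) : ℕ) < n - 2 from hk)] at h0
    rcases lt_or_ge k 2 with h2 | h2
    · rw [dif_neg (show ¬ 2 ≤ ((⟨k, h⟩ : Fin n) : ℕ) from by show ¬ 2 ≤ k; omega)] at h0
      linarith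
    · rw [dif_pos (show 2 ≤ ((⟨k, h⟩ : Fin n) : ℕ) from h2)] at h0
      rw [ih (k - 2) (by omega) (by omega)] at h0
      linarith

lemma kerlast (n : ℕ) (hn : 2 < n) (heven : Even n)
    (B : Matrix (Fin n) (Fin n) ℤ)
    (hB : ∀ (i j : Fin n),
      B i j =
        if (i : ℕ) = (j : ℕ) ∧ (j : ℕ) < n - 2 then -1
        else if (i : ℕ) = (j : ℕ) + 2 ∧ (j : ℕ) < n - 2 then 1
        else if (i : ℕ) = n - 2 ∧ ((j : ℕ) = n - 2 ∨ (j : ℕ) = n - 1) then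
          -(2 ^ ((n - 2) / 2))
        else if (i : ℕ) = n - 1 ∧ ((j : ℕ) = n - 2 ∨ (j : ℕ) = n - 1) then
          2 ^ ((n - 2) / 2)
        else 0)
    (x : Fin n → ℤ) (hx : B.mulVec x = 0) (h1 : n - 1 < n) (h2 : n - 2 < n) :
    x ⟨n - 1, h1⟩ = - x ⟨n - 2, h2⟩ := by
  have hn4 : 4 ≤ n := by obtain ⟨m, hm⟩ := heven; omega
  obtain ⟨i, hvi⟩ : ∃ i : Fin n, (i : ℕ) = n - 2 := ⟨⟨n - 2, h2⟩, rfl⟩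
  have h0 := congrFun hx i
  rw [bkey n hn heven B hB x i] at h0
  simp only [Pi.zero_apply] at h0
  rw [dif_pos (show 2 ≤ (i : ℕ) by omega)] at h0
  simp only [if_neg (show ¬ (i : ℕ) < n - 2 by omega), if_pos hvi] at h0
  rw [kerchar n hn heven B hB x hx ((i : ℕ) - 2) (by omega)] at h0
  have hKpos : (0:ℤ) < 2 ^ ((n - 2) / 2) := by positivity
  have hz : x ⟨n - 2, h2⟩ + x ⟨n - 1, h1⟩ = 0 := by
    rcases mul_eq_zero.mp (show -(2 ^ ((n - 2) / 2)) * (x ⟨n - 2, h2⟩ + x ⟨n - 1, h1⟩) = 0 from by linarith) with hc | hc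
    · exfalso; linarith
    · exact hc
  linarith

noncomputable def sigA (n : ℕ) : (Fin n → ℤ) →+ ℤ :=
  AddMonoidHom.mk' (fun y => ∑ i, y i) (fun a b => by
    simp [Finset.sum_add_distrib])

noncomputable def tauA (n : ℕ) : (Fin n → ℤ) →+ ℤ :=
  AddMonoidHom.mk' (fun y => ∑ i : Fin n, if Even (i : ℕ) then y i else 0) (fun a b => by
    rw [← Finset.sum_add_distrib]
    exact Finset.sum_congr rfl fun i _ => by split_ifs <;> simp)

noncomputable def phi (n N : ℕ) : (Fin n → ℤ) →ₗ[ℤ] ℤ × ZMod N :=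
  ((sigA n).toIntLinearMap).prod ((Int.castAddHom (ZMod N)).comp (tauA n)).toIntLinearMap

lemma phi_apply (n N : ℕ) (y : Fin n → ℤ) :
    phi n N y = (∑ i, y i, ((∑ i : Fin n, if Even (i : ℕ) then y i else 0 : ℤ) : ZMod N)) := rfl

def Yfun (n : ℕ) (y : Fin n → ℤ) (k : ℕ) : ℤ := if h : k < n then y ⟨k, h⟩ else 0

lemma Yfun_eq (n : ℕ) (y : Fin n → ℤ) (i : Fin n) : Yfun n y (i : ℕ) = y i := by
  unfold Yfun
  rw [dif_pos i.isLt, Fin.eta]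

def Gfun (n : ℕ) (y : Fin n → ℤ) (k : ℕ) : ℤ :=
  ∑ i ∈ Finset.range n, if i ≤ k ∧ i % 2 = k % 2 then Yfun n y i else 0

lemma G_step (n : ℕ) (y : Fin n → ℤ) (k : ℕ) (h2 : 2 ≤ k) (hk : k < n) :
    Gfun n y k = Gfun n y (k - 2) + Yfun n y k := by
  unfold Gfun
  rw [Finset.sum_congr rfl (fun (i : ℕ) hi => (by
      have := Finset.mem_range.mp hi
      split_ifs <;> first | ring1 | (exfalso; omega) :
    (if i ≤ k ∧ i % 2 = k % 2 then Yfun n y i else 0)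
      = (if i ≤ k - 2 ∧ i % 2 = (k - 2) % 2 then Yfun n y i else 0)
        + (if i = k then Yfun n y i else 0))), Finset.sum_add_distrib,
    Finset.sum_ite_eq' (Finset.range n) k (fun i => Yfun n y i),
    if_pos (Finset.mem_range.mpr hk)]

lemma G_base (n : ℕ) (y : Fin n → ℤ) (k : ℕ) (h2 : k < 2) (hk : k < n) :
    Gfun n y k = Yfun n y k := by
  unfold Gfun
  rw [Finset.sum_congr rfl (fun (i : ℕ) hi => (by
      have := Finset.mem_range.mp hi
      split_ifs <;> first | rfl | (exfalso; omega) :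
    (if i ≤ k ∧ i % 2 = k % 2 then Yfun n y i else 0)
      = (if i = k then Yfun n y i else 0))),
    Finset.sum_ite_eq' (Finset.range n) k (fun i => Yfun n y i),
    if_pos (Finset.mem_range.mpr hk)]

lemma colsum (n : ℕ) (hn : 2 < n) (heven : Even n)
    (B : Matrix (Fin n) (Fin n) ℤ)
    (hB : ∀ (i j : Fin n),
      B i j =
        if (i : ℕ) = (j : ℕ) ∧ (j : ℕ) < n - 2 then -1
        else if (i : ℕ) = (j : ℕ) + 2 ∧ (j : ℕ) < n - 2 then 1
        else if (i : ℕ) = n - 2 ∧ ((j : ℕ) = n - 2 ∨ (j : ℕ) = n - 1) then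
          -(2 ^ ((n - 2) / 2))
        else if (i : ℕ) = n - 1 ∧ ((j : ℕ) = n - 2 ∨ (j : ℕ) = n - 1) then
          2 ^ ((n - 2) / 2)
        else 0)
    (j : Fin n) : (∑ i, B i j) = 0 := by
  have hn4 : 4 ≤ n := by obtain ⟨m, hm⟩ := heven; omega
  have hjv := j.isLt
  rcases lt_or_ge (j : ℕ) (n - 2) with hj | hj
  · rw [rowsum3 (fun _ => (1:ℤ)) (-1) 1 0 (j : ℕ) ((j : ℕ) + 2) 0
      (by omega) (by omega) (by omega) (fun i => B i j)
      (fun i => by have hiv := i.isLt; show B i j = _; rw [hB i j]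
                   split_ifs <;> first | ring1 | (exfalso; omega))]
    norm_num
  · rw [rowsum3 (fun _ => (1:ℤ)) (-(2 ^ ((n - 2) / 2))) (2 ^ ((n - 2) / 2)) 0 (n - 2) (n - 1) 0
      (by omega) (by omega) (by omega) (fun i => B i j)
      (fun i => by have hiv := i.isLt; show B i j = _; rw [hB i j]
                   split_ifs <;> first | ring1 | (exfalso; omega))]
    ring1

lemma wcolsum (n : ℕ) (hn : 2 < n) (heven : Even n)
    (B : Matrix (Fin n) (Fin n) ℤ)
    (hB : ∀ (i j : Fin n),
      B i j =
        if (i : ℕ) = (j : ℕ) ∧ (j : ℕ) < n - 2 then -1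
        else if (i : ℕ) = (j : ℕ) + 2 ∧ (j : ℕ) < n - 2 then 1
        else if (i : ℕ) = n - 2 ∧ ((j : ℕ) = n - 2 ∨ (j : ℕ) = n - 1) then
          -(2 ^ ((n - 2) / 2))
        else if (i : ℕ) = n - 1 ∧ ((j : ℕ) = n - 2 ∨ (j : ℕ) = n - 1) then
          2 ^ ((n - 2) / 2)
        else 0)
    (j : Fin n) :
    (∑ i : Fin n, if Even (i : ℕ) then B i j else 0) = 0 ∨
      (∑ i : Fin n, if Even (i : ℕ) then B i j else 0) = -(2 ^ ((n - 2) / 2)) := by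
  have hn4 : 4 ≤ n := by obtain ⟨m, hm⟩ := heven; omega
  have hn2 : n % 2 = 0 := Nat.even_iff.mp heven
  have hjv := j.isLt
  rcases lt_or_ge (j : ℕ) (n - 2) with hj | hj
  · rcases Nat.even_or_odd (j : ℕ) with hpar | hpar
    · left
      have hj2 : (j : ℕ) % 2 = 0 := Nat.even_iff.mp hpar
      rw [rowsum3 (fun _ => (1:ℤ)) (-1) 1 0 (j : ℕ) ((j : ℕ) + 2) 0
        (by omega) (by omega) (by omega) (fun i => if Even (i : ℕ) then B i j else 0)
        (fun i => by have hiv := i.isLt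
                     show (if Even (i : ℕ) then B i j else 0) = _
                     rw [hB i j]; simp only [Nat.even_iff]
                     split_ifs <;> first | ring1 | (exfalso; omega))]
      norm_num
    · left
      have hj2 : (j : ℕ) % 2 = 1 := Nat.odd_iff.mp hpar
      refine Finset.sum_eq_zero fun i _ => ?_
      have hiv := i.isLt
      rw [hB i j]; simp only [Nat.even_iff]
      split_ifs <;> first | rfl | (exfalso; omega)
  · right
    rw [rowsum3 (fun _ => (1:ℤ)) (-(2 ^ ((n - 2) / 2))) 0 0 (n - 2) 0 0
      (by omega) (by omega) (by omega) (fun i => if Even (i : ℕ) then B i j else 0)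
      (fun i => by have hiv := i.isLt
                   show (if Even (i : ℕ) then B i j else 0) = _
                   rw [hB i j]; simp only [Nat.even_iff]
                   split_ifs <;> first | ring1 | (exfalso; omega))]
    ring1

def kvec (n : ℕ) : Fin n → ℤ :=
  fun i => if (i : ℕ) = n - 2 then 1 else if (i : ℕ) = n - 1 then -1 else 0

lemma kvec_apply (n k : ℕ) (h : k < n) :
    kvec n ⟨k, h⟩ = if k = n - 2 then 1 else if k = n - 1 then -1 else 0 := rfl

def xfun (n : ℕ) (y : Fin n → ℤ) (s : ℤ) : Fin n → ℤ :=
  fun j => if (j : ℕ) < n - 2 then -(Gfun n y (j : ℕ)) else if (j : ℕ) = n - 2 then -s else 0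

lemma xfun_eq (n : ℕ) (y : Fin n → ℤ) (s : ℤ) (j : Fin n) :
    xfun n y s j = if (j : ℕ) < n - 2 then -(Gfun n y (j : ℕ))
      else if (j : ℕ) = n - 2 then -s else 0 := rfl

lemma xfun_apply (n : ℕ) (y : Fin n → ℤ) (s : ℤ) (k : ℕ) (h : k < n) :
    xfun n y s ⟨k, h⟩ = if k < n - 2 then -(Gfun n y k)
      else if k = n - 2 then -s else 0 := rfl

def wit (n : ℕ) (a b' : ℤ) : Fin n → ℤ :=
  fun i => if (i : ℕ) = n - 2 then b' else if (i : ℕ) = n - 1 then a - b' else 0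

lemma wit_eq (n : ℕ) (a b' : ℤ) (i : Fin n) :
    wit n a b' i = if (i : ℕ) = n - 2 then b' else if (i : ℕ) = n - 1 then a - b' else 0 := rfl

lemma Bkvec (n : ℕ) (hn : 2 < n) (heven : Even n)
    (B : Matrix (Fin n) (Fin n) ℤ)
    (hB : ∀ (i j : Fin n),
      B i j =
        if (i : ℕ) = (j : ℕ) ∧ (j : ℕ) < n - 2 then -1
        else if (i : ℕ) = (j : ℕ) + 2 ∧ (j : ℕ) < n - 2 then 1
        else if (i : ℕ) = n - 2 ∧ ((j : ℕ) = n - 2 ∨ (j : ℕ) = n - 1) then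
          -(2 ^ ((n - 2) / 2))
        else if (i : ℕ) = n - 1 ∧ ((j : ℕ) = n - 2 ∨ (j : ℕ) = n - 1) then
          2 ^ ((n - 2) / 2)
        else 0) :
    B.mulVec (kvec n) = 0 := by
  have hn4 : 4 ≤ n := by obtain ⟨m, hm⟩ := heven; omega
  funext i
  rw [bkey n hn heven B hB (kvec n) i]
  simp only [Pi.zero_apply]
  have hiv := i.isLt
  have hki : kvec n i = if (i : ℕ) = n - 2 then 1 else if (i : ℕ) = n - 1 then -1 else 0 := rfl
  rcases lt_or_ge (i : ℕ) (n - 2) with hi | hi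
  · rw [if_pos hi, hki, if_neg (by omega), if_neg (by omega)]
    rcases lt_or_ge (i : ℕ) 2 with h2 | h2
    · rw [dif_neg (by omega)]; ring1
    · rw [dif_pos h2, kvec_apply n ((i : ℕ) - 2), if_neg (by omega), if_neg (by omega)]
      ring1
  · rw [if_neg (by omega), dif_pos (show 2 ≤ (i : ℕ) by omega),
      kvec_apply n ((i : ℕ) - 2), if_neg (by omega), if_neg (by omega),
      kvec_apply n (n - 2), kvec_apply n (n - 1),
      if_pos (rfl : n - 2 = n - 2), if_neg (show ¬ n - 1 = n - 2 by omega),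
      if_pos (rfl : n - 1 = n - 1)]
    ring1

/-- for even `n > 2`, the integer matrix `B : ℤⁿ → ℤⁿ` from the
push-forward computation has kernel `ℤ` and cokernel `ℤ ⊕ ℤ/2^{(n−2)/2}ℤ`. -/
theorem pushforward_matrix_even
    (n : ℕ) (hn : 2 < n) (heven : Even n)
    (B : Matrix (Fin n) (Fin n) ℤ)
    (hB : ∀ (i j : Fin n),
      B i j =
        if (i : ℕ) = (j : ℕ) ∧ (j : ℕ) < n - 2 then -1
        else if (i : ℕ) = (j : ℕ) + 2 ∧ (j : ℕ) < n - 2 then 1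
        else if (i : ℕ) = n - 2 ∧ ((j : ℕ) = n - 2 ∨ (j : ℕ) = n - 1) then
          -(2 ^ ((n - 2) / 2))
        else if (i : ℕ) = n - 1 ∧ ((j : ℕ) = n - 2 ∨ (j : ℕ) = n - 1) then
          2 ^ ((n - 2) / 2)
        else 0) :
    Nonempty ((LinearMap.ker B.mulVecLin) ≃ₗ[ℤ] ℤ) ∧
      Nonempty (((Fin n → ℤ) ⧸ LinearMap.range B.mulVecLin) ≃ₗ[ℤ]
        ℤ × ZMod (2 ^ ((n - 2) / 2))) := by
  have hn4 : 4 ≤ n := by obtain ⟨m, hm⟩ := heven; omega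
  have hn2 : n % 2 = 0 := Nat.even_iff.mp heven
  constructor
  · -- kernel ≃ ℤ
    have hvker : ∀ t : ℤ, t • kvec n ∈ LinearMap.ker B.mulVecLin := fun t => by
      rw [LinearMap.mem_ker, map_smul, Matrix.mulVecLin_apply, Bkvec n hn heven B hB, smul_zero]
    refine ⟨LinearEquiv.ofLinear
      ((LinearMap.proj (⟨n - 2, by omega⟩ : Fin n)).comp (LinearMap.ker B.mulVecLin).subtype)
      ((LinearMap.toSpanSingleton ℤ (Fin n → ℤ) (kvec n)).codRestrict _ hvker) ?_ ?_⟩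
    · apply LinearMap.ext; intro t
      show (t • kvec n) ⟨n - 2, by omega⟩ = t
      rw [Pi.smul_apply, kvec_apply n (n - 2), if_pos (rfl : n - 2 = n - 2),
        smul_eq_mul, mul_one]
    · apply LinearMap.ext; rintro ⟨x, hx⟩
      have hx' : B.mulVec x = 0 := by rwa [LinearMap.mem_ker, Matrix.mulVecLin_apply] at hx
      apply Subtype.ext
      show (x ⟨n - 2, by omega⟩) • kvec n = x
      funext i
      have hiv := i.isLt
      rw [Pi.smul_apply, smul_eq_mul, ← Fin.eta i i.isLt, kvec_apply n (i : ℕ) i.isLt]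
      rcases lt_or_ge (i : ℕ) (n - 2) with hi | hi
      · rw [if_neg (by omega), if_neg (by omega),
          kerchar n hn heven B hB x hx' (i : ℕ) hi, mul_zero]
      · rcases (by omega : (i : ℕ) = n - 2 ∨ (i : ℕ) = n - 1) with h5 | h5
        · rw [if_pos h5, mul_one]
          exact congrArg x (Fin.ext (show n - 2 = (i : ℕ) from h5.symm))
        · rw [if_neg (by omega), if_pos h5]
          have hk := kerlast n hn heven B hB x hx' (by omega) (by omega)
          have e : x ⟨(i : ℕ), i.isLt⟩ = x ⟨n - 1, by omega⟩ :=
            congrArg x (Fin.ext (show (i : ℕ) = n - 1 from h5))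
          linarith [hk, e]
  · -- cokernel
    have hsurj : Function.Surjective (phi n (2 ^ ((n - 2) / 2))) := by
      rintro ⟨a, b⟩
      obtain ⟨b', rfl⟩ := ZMod.intCast_surjective b
      refine ⟨wit n a b', ?_⟩
      rw [phi_apply]
      have c1 : (∑ i, wit n a b' i) = a := by
        rw [Finset.sum_congr rfl (fun (i : Fin n) _ => (by
            rw [wit_eq]; have hiv := i.isLt; split_ifs <;> first | ring1 | (exfalso; omega) :
          wit n a b' i = (if (i : ℕ) = n - 2 then b' else 0)
            + (if (i : ℕ) = n - 1 then a - b' else 0))),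
          Finset.sum_add_distrib, sum_ite_val (n - 2) (by omega) (fun _ => b'),
          sum_ite_val (n - 1) (by omega) (fun _ => a - b')]
        ring1
      have c2 : (∑ i : Fin n, if Even (i : ℕ) then wit n a b' i else 0) = b' := by
        rw [Finset.sum_congr rfl (fun (i : Fin n) _ => (by
            rw [wit_eq]; have hiv := i.isLt; simp only [Nat.even_iff]
            split_ifs <;> first | rfl | ring1 | (exfalso; omega) :
          (if Even (i : ℕ) then wit n a b' i else 0) = (if (i : ℕ) = n - 2 then b' else 0))),
          sum_ite_val (n - 2) (by omega) (fun _ => b')]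
      rw [c1, c2]
    have hrange : LinearMap.range B.mulVecLin = LinearMap.ker (phi n (2 ^ ((n - 2) / 2))) := by
      apply le_antisymm
      · rintro z ⟨x, rfl⟩
        rw [LinearMap.mem_ker, Matrix.mulVecLin_apply, phi_apply,
          show ((0 : ℤ × ZMod (2 ^ ((n - 2) / 2)))) = ((0 : ℤ), (0 : ZMod (2 ^ ((n - 2) / 2)))) from rfl,
          Prod.mk.injEq]
        constructor
        · have hrw : ∀ i : Fin n, B.mulVec x i = ∑ j, B i j * x j := fun i => rfl
          rw [Finset.sum_congr rfl fun i _ => hrw i, Finset.sum_comm]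
          exact Finset.sum_eq_zero fun j _ => by
            rw [← Finset.sum_mul, colsum n hn heven B hB j, zero_mul]
        · have key : (∑ i : Fin n, if Even (i : ℕ) then B.mulVec x i else 0)
              = ∑ j : Fin n, (∑ i : Fin n, if Even (i : ℕ) then B i j else 0) * x j := by
            rw [Finset.sum_congr rfl (fun (i : Fin n) _ => (by
                by_cases h : Even (i : ℕ)
                · simp only [if_pos h]; rfl
                · simp only [if_neg h]
                  exact (Finset.sum_eq_zero fun j _ => zero_mul (x j)).symm :
              (if Even (i : ℕ) then B.mulVec x i else 0)
                = ∑ j : Fin n, (if Even (i : ℕ) then B i j else 0) * x j)),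
              Finset.sum_comm]
            exact Finset.sum_congr rfl fun j _ => by rw [← Finset.sum_mul]
          rw [key, Int.cast_sum]
          refine Finset.sum_eq_zero fun j _ => ?_
          rcases wcolsum n hn heven B hB j with h | h <;> rw [h]
          · push_cast; ring
          · have h2 : ((2 ^ ((n - 2) / 2) : ℕ) : ZMod (2 ^ ((n - 2) / 2))) = 0 :=
              ZMod.natCast_self _
            push_cast at h2 ⊢
            rw [h2]; ring
      · intro y hy
        rw [LinearMap.mem_ker, phi_apply,
          show ((0 : ℤ × ZMod (2 ^ ((n - 2) / 2)))) = ((0 : ℤ), (0 : ZMod (2 ^ ((n - 2) / 2)))) from rfl,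
          Prod.mk.injEq] at hy
        obtain ⟨hsum, hE0⟩ := hy
        obtain ⟨s, hs⟩ : ((2 : ℤ) ^ ((n - 2) / 2)) ∣
            (∑ i : Fin n, if Even (i : ℕ) then y i else 0) := by
          have hd := (ZMod.intCast_zmod_eq_zero_iff_dvd _ (2 ^ ((n - 2) / 2))).mp hE0
          push_cast at hd
          exact hd
        refine ⟨xfun n y s, ?_⟩
        have hYeq : ∀ i : Fin n, Yfun n y (i : ℕ) = y i := Yfun_eq n y
        have hEG : Gfun n y (n - 2) = ∑ i : Fin n, (if Even (i : ℕ) then y i else 0) := by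
          unfold Gfun
          rw [← Fin.sum_univ_eq_sum_range
            (fun k => if k ≤ n - 2 ∧ k % 2 = (n - 2) % 2 then Yfun n y k else 0) n]
          refine Finset.sum_congr rfl fun i _ => ?_
          have hiv := i.isLt
          simp only [Nat.even_iff]
          split_ifs <;> first | exact hYeq i | rfl | (exfalso; omega)
        have hOG : 0 = (∑ i : Fin n, if Even (i : ℕ) then y i else 0)
            + Gfun n y (n - 3) + Yfun n y (n - 1) := by
          have h1 : (∑ i : Fin n, y i)
              = ∑ i : Fin n, (((if Even (i : ℕ) then y i else 0)
                + (fun k => if k ≤ n - 3 ∧ k % 2 = (n - 3) % 2 then Yfun n y k else 0) (i : ℕ))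
                  + (if (i : ℕ) = n - 1 then Yfun n y (i : ℕ) else 0)) := by
            refine Finset.sum_congr rfl fun i _ => ?_
            have hiv := i.isLt
            simp only [hYeq, Nat.even_iff]
            split_ifs <;> first | ring1 | (exfalso; omega)
          rw [hsum] at h1
          rw [Finset.sum_add_distrib, Finset.sum_add_distrib,
            Fin.sum_univ_eq_sum_range
              (fun k => if k ≤ n - 3 ∧ k % 2 = (n - 3) % 2 then Yfun n y k else 0) n,
            sum_ite_val (n - 1) (by omega) (fun i : Fin n => Yfun n y (i : ℕ))] at h1
          exact h1
        rw [Matrix.mulVecLin_apply]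
        funext i
        rw [bkey n hn heven B hB (xfun n y s) i]
        have hiv := i.isLt
        rcases lt_or_ge (i : ℕ) (n - 2) with hi | hi
        · rw [if_pos hi]
          rcases lt_or_ge (i : ℕ) 2 with h2 | h2
          · rw [dif_neg (by omega), xfun_eq n y s i, if_pos hi,
              G_base n y (i : ℕ) h2 (by omega), hYeq i]
            ring1
          · rw [dif_pos h2, xfun_eq n y s i, if_pos hi,
              xfun_apply n y s ((i : ℕ) - 2), if_pos (show (i : ℕ) - 2 < n - 2 by omega),
              G_step n y (i : ℕ) h2 (by omega), hYeq i]
            ring1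
        · rw [if_neg (by omega), dif_pos (show 2 ≤ (i : ℕ) by omega),
            xfun_apply n y s ((i : ℕ) - 2), if_pos (show (i : ℕ) - 2 < n - 2 by omega),
            xfun_apply n y s (n - 2), xfun_apply n y s (n - 1),
            if_neg (show ¬ n - 2 < n - 2 by omega), if_pos (rfl : n - 2 = n - 2),
            if_neg (show ¬ n - 1 < n - 2 by omega), if_neg (show ¬ n - 1 = n - 2 by omega)]
          rcases (by omega : (i : ℕ) = n - 2 ∨ (i : ℕ) = n - 1) with h5 | h5
          · rw [if_pos h5, show (i : ℕ) - 2 = n - 4 from by omega]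
            have hgs := G_step n y (n - 2) (by omega) (by omega)
            rw [show n - 2 - 2 = n - 4 from by omega] at hgs
            have hyi : y i = Yfun n y (n - 2) := by
              rw [← hYeq i]; congr 1
            have hGE : Gfun n y (n - 2) = 2 ^ ((n - 2) / 2) * s := by rw [hEG]; exact hs
            rw [hyi]
            linarith [hgs, hGE]
          · rw [if_neg (show ¬ (i : ℕ) = n - 2 by omega),
              show (i : ℕ) - 2 = n - 3 from by omega]
            have hyi : y i = Yfun n y (n - 1) := by
              rw [← hYeq i]; congr 1
            rw [hyi]
            linarith [hOG, hs]
    exact ⟨(Submodule.quotEquivOfEq _ _ hrange).trans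
      ((phi n (2 ^ ((n - 2) / 2))).quotKerEquivOfSurjective hsurj)⟩
end
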